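/- arXiv:2208.00962 — 4 statements merged into one kernel-verified Lean document; each statement's English description precedes it below -/
import Mathlib

section
/- Let f be an order-preserving homeomorphism of [0,1]. The map x ↦ δ_x is a bijective isometry from the fixed-point set Fix(f) = {x ∈ [0,1] : f(x) = x}, equipped with the Euclidean metric, onto the set M_f^erg([0,1]) of f-invariant ergodic Borel probability measures equipped with the Lévy–Prokhorov metric LP. -/
open MeasureTheory Filter Metric Set Topology

noncomputable section

/-- The set of `f`-invariant ergodic Borel probability measures, viewed inside the
Lévy–Prokhorov metric space of probability measures. -/
def ergodicMeasures {X : Type*} [MetricSpace X] [MeasurableSpace X] (f : X → X) :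
    Set (LevyProkhorov (ProbabilityMeasure X)) :=
  {μ | Ergodic f ((LevyProkhorov.toMeasureEquiv (α := ProbabilityMeasure X) μ : ProbabilityMeasure X) : Measure X)}

section AuxLemmas
open ENNReal

abbrev XX := Set.Icc (0:ℝ) 1

lemma dirac_ergodic_aux (f : XX ≃ₜ XX) {x : XX} (hx : f x = x) :
    Ergodic (⇑f) (Measure.dirac x) := by
  refine ⟨⟨f.continuous.measurable, by rw [Measure.map_dirac' f.continuous.measurable, hx]⟩, ⟨?_⟩⟩
  intro s hs hinv
  rw [eventuallyConst_set']
  by_cases h : x ∈ s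
  · right
    rw [ae_eq_univ, Measure.dirac_apply' x hs.compl]
    simp [h]
  · left
    rw [ae_eq_empty, Measure.dirac_apply' x hs]
    simp [h]

lemma ergodic_eq_dirac (f : XX ≃ₜ XX) (hf : StrictMono f)
    (μ : Measure XX) [IsProbabilityMeasure μ] (hE : Ergodic (⇑f) μ) :
    ∃ x : XX, f x = x ∧ μ = Measure.dirac x := by
  classical
  have hcoe : Measurable (fun x : XX => (x : ℝ)) := measurable_subtype_coe
  have hcont1 : Continuous (fun x : XX => ((f x : ℝ))) :=
    continuous_subtype_val.comp f.continuous
  have hcont2 : Continuous (fun x : XX => (x : ℝ)) := continuous_subtype_val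
  have hint1 : Integrable (fun x : XX => ((f x : ℝ))) μ :=
    hcont1.integrable_of_hasCompactSupport (isClosed_tsupport _).isCompact
  have hint2 : Integrable (fun x : XX => (x : ℝ)) μ :=
    hcont2.integrable_of_hasCompactSupport (isClosed_tsupport _).isCompact
  have hint_eq : ∫ x, ((f x : ℝ)) ∂μ = ∫ x, (x : ℝ) ∂μ := by
    calc ∫ x, ((f x : ℝ)) ∂μ = ∫ y, (y : ℝ) ∂(Measure.map (⇑f) μ) :=
          (integral_map f.continuous.measurable.aemeasurable
            hcont2.aestronglyMeasurable).symm
      _ = ∫ y, (y : ℝ) ∂μ := by rw [hE.toMeasurePreserving.map_eq]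
  -- the two strict inequality sets are null
  have main : ∀ C : Set XX, MeasurableSet C → (⇑f) ⁻¹' C = C →
      (∀ x ∈ C, ((f x : ℝ)) ≠ (x : ℝ)) →
      (∀ x ∈ C, (0:ℝ) ≤ ((f x : ℝ)) - (x : ℝ)) ∨ (∀ x ∈ C, ((f x : ℝ)) - (x : ℝ) ≤ 0) →
      μ C = 0 := by
    intro C hC hCinv hne hsign
    rcases hE.ae_empty_or_univ hC hCinv with h | h
    · rwa [ae_eq_empty] at h
    · exfalso
      have hcompl : μ Cᶜ = 0 := ae_eq_univ.mp h
      have haeC : ∀ᵐ x ∂μ, x ∈ C := by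
        rw [ae_iff]
        exact hcompl
      set g : XX → ℝ := fun x => ((f x : ℝ)) - (x : ℝ) with hg
      have hgint : Integrable g μ := hint1.sub hint2
      have hzero : ∫ x, g x ∂μ = 0 := by
        rw [integral_sub hint1 hint2, hint_eq, sub_self]
      have hgzero : g =ᵐ[μ] 0 := by
        rcases hsign with hpos | hneg
        · have hnn : 0 ≤ᵐ[μ] g := haeC.mono fun x hx => hpos x hx
          exact (integral_eq_zero_iff_of_nonneg_ae hnn hgint).mp hzero
        · have hnn : 0 ≤ᵐ[μ] (-g) := haeC.mono fun x hx => by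
            simp only [Pi.zero_apply, Pi.neg_apply, neg_nonneg, hg]
            exact hneg x hx
          have : ∫ x, (-g) x ∂μ = 0 := by
            simp only [Pi.neg_apply]
            rw [integral_neg, hzero, neg_zero]
          have h0 := (integral_eq_zero_iff_of_nonneg_ae hnn hgint.neg).mp this
          filter_upwards [h0] with x hx
          simpa using hx
      have hfalse : ∀ᵐ x ∂μ, False := by
        filter_upwards [hgzero, haeC] with x h1 h2
        exact hne x h2 (by simpa [hg, sub_eq_zero] using h1)
      have : μ univ = 0 := by
        rw [ae_iff] at hfalse
        simpa using hfalse
      simp [measure_univ] at this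
  set A : Set XX := {x | (x:ℝ) < ((f x : ℝ))} with hA
  set B : Set XX := {x | ((f x : ℝ)) < (x:ℝ)} with hB
  have hA_mble : MeasurableSet A := measurableSet_lt hcoe (hcoe.comp f.continuous.measurable)
  have hB_mble : MeasurableSet B := measurableSet_lt (hcoe.comp f.continuous.measurable) hcoe
  have hAinv : (⇑f) ⁻¹' A = A := by
    ext z
    simp only [hA, mem_preimage, mem_setOf_eq, Subtype.coe_lt_coe]
    exact hf.lt_iff_lt
  have hBinv : (⇑f) ⁻¹' B = B := by
    ext z
    simp only [hB, mem_preimage, mem_setOf_eq, Subtype.coe_lt_coe]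
    exact hf.lt_iff_lt
  have hA0 : μ A = 0 :=
    main A hA_mble hAinv (fun x hx => ne_of_gt hx) (Or.inl fun x hx => by
      simp only [hA, mem_setOf_eq] at hx; linarith)
  have hB0 : μ B = 0 :=
    main B hB_mble hBinv (fun x hx => ne_of_lt hx) (Or.inr fun x hx => by
      simp only [hB, mem_setOf_eq] at hx; linarith)
  have hFix : μ {x : XX | f x ≠ x} = 0 := by
    refine measure_mono_null (t := A ∪ B) ?_ (measure_union_null hA0 hB0)
    intro x hx
    rcases lt_or_gt_of_ne (fun h : (x:ℝ) = ((f x : ℝ)) =>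
      hx (Subtype.ext h.symm)) with h | h
    · exact Or.inl h
    · exact Or.inr h
  -- zero-one law for all measurable sets
  have h01 : ∀ s : Set XX, MeasurableSet s → μ s = 0 ∨ μ s = 1 := by
    intro s hs
    have hid : ∀ᵐ x ∂μ, f x = x := by
      rw [ae_iff]
      simpa using hFix
    have hae : (⇑f) ⁻¹' s =ᵐ[μ] s := by
      rw [eventuallyEq_set]
      filter_upwards [hid] with x hx
      simp [mem_preimage, hx]
    rcases hE.quasiErgodic.ae_empty_or_univ₀ hs.nullMeasurableSet hae with h | h
    · left; rwa [ae_eq_empty] at h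
    · right
      have := ae_eq_univ.mp h
      rwa [prob_compl_eq_zero_iff hs] at this
  -- extract the atom
  have hIic_mble : ∀ t : ℝ, MeasurableSet {x : XX | (x:ℝ) ≤ t} :=
    fun t => measurableSet_le hcoe measurable_const
  set S : Set ℝ := {t : ℝ | μ {x : XX | (x:ℝ) ≤ t} = 1} with hS
  have hS1 : (1:ℝ) ∈ S := by
    have : {x : XX | (x:ℝ) ≤ 1} = univ := eq_univ_of_forall fun x => x.2.2
    simp [hS, this]
  have hSbdd : BddBelow S := by
    refine ⟨0, fun t ht => ?_⟩
    by_contra hlt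
    push_neg at hlt
    have : {x : XX | (x:ℝ) ≤ t} = ∅ := by
      apply eq_empty_of_forall_notMem
      intro x hx
      exact absurd (le_trans x.2.1 hx) (not_le.mpr hlt)
    rw [hS, mem_setOf_eq, this] at ht
    simp at ht
  set c : ℝ := sInf S with hc
  have hSne : S.Nonempty := ⟨1, hS1⟩
  -- μ {x | c < x} = 0
  have hgt0 : μ {x : XX | c < (x:ℝ)} = 0 := by
    refine measure_mono_null (t := ⋃ n : ℕ, {x : XX | c + 1/(n+1) ≤ (x:ℝ)}) ?_ ?_
    · intro x hx
      simp only [mem_setOf_eq] at hx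
      obtain ⟨n, hn⟩ := exists_nat_one_div_lt (ε := (x:ℝ) - c) (by linarith)
      exact mem_iUnion.mpr ⟨n, by simp only [mem_setOf_eq]; push_cast; linarith⟩
    · apply measure_iUnion_null
      intro n
      have hcn : c < c + 1/(n+1) := by
        have hpos : (0:ℝ) < 1/((n:ℝ)+1) := by positivity
        push_cast
        linarith
      obtain ⟨t, htS, htlt⟩ := (csInf_lt_iff hSbdd hSne).mp hcn
      refine measure_mono_null (t := {x : XX | (x:ℝ) ≤ t}ᶜ) ?_ ?_
      · intro x hx
        simp only [mem_compl_iff, mem_setOf_eq, not_le] at hx ⊢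
        exact htlt.trans_le hx
      · rw [prob_compl_eq_zero_iff (hIic_mble t)]
        exact htS
  -- μ {x | x < c} = 0
  have hlt0 : μ {x : XX | (x:ℝ) < c} = 0 := by
    refine measure_mono_null (t := ⋃ n : ℕ, {x : XX | (x:ℝ) ≤ c - 1/(n+1)}) ?_ ?_
    · intro x hx
      simp only [mem_setOf_eq] at hx
      obtain ⟨n, hn⟩ := exists_nat_one_div_lt (ε := c - (x:ℝ)) (by linarith)
      exact mem_iUnion.mpr ⟨n, by simp only [mem_setOf_eq]; push_cast; linarith⟩
    · apply measure_iUnion_null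
      intro n
      rcases h01 _ (hIic_mble (c - 1/(n+1))) with h | h
      · exact h
      · exfalso
        have : c ≤ c - 1/(n+1) := csInf_le hSbdd h
        have hpos : (0:ℝ) < 1/((n:ℝ)+1) := by positivity
        linarith
  have heq1 : μ {x : XX | (x:ℝ) = c} = 1 := by
    have hm : MeasurableSet {x : XX | (x:ℝ) = c} :=
      measurableSet_eq_fun hcoe measurable_const
    rw [← prob_compl_eq_zero_iff hm]
    refine measure_mono_null (t := {x : XX | (x:ℝ) < c} ∪ {x : XX | c < (x:ℝ)}) ?_ ?_
    · intro x hx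
      simp only [mem_compl_iff, mem_setOf_eq] at hx
      rcases lt_or_gt_of_ne hx with h | h
      · exact Or.inl h
      · exact Or.inr h
    · exact measure_union_null hlt0 hgt0
  obtain ⟨x₀, hx₀⟩ := nonempty_of_measure_ne_zero (heq1 ▸ one_ne_zero)
  have hsingle : {x : XX | (x:ℝ) = c} = {x₀} := by
    apply Set.eq_singleton_iff_unique_mem.mpr ⟨hx₀, fun z hz => ?_⟩
    exact Subtype.ext (hz.trans hx₀.symm)
  have hμx₀ : μ {x₀} = 1 := by rw [← hsingle]; exact heq1
  have hcompl0 : μ ({x₀}ᶜ) = 0 := by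
    rw [prob_compl_eq_zero_iff (measurableSet_singleton x₀)]
    exact hμx₀
  have hfx₀ : f x₀ = x₀ := by
    by_contra hne
    have : ({x₀} : Set XX) ⊆ {x : XX | f x ≠ x} := by
      intro z hz
      rw [mem_singleton_iff] at hz
      subst hz
      exact hne
    have := measure_mono_null this hFix
    rw [hμx₀] at this
    exact one_ne_zero this
  refine ⟨x₀, hfx₀, ?_⟩
  ext t ht
  rw [Measure.dirac_apply' x₀ ht]
  by_cases h : x₀ ∈ t
  · rw [Set.indicator_of_mem h]
    apply le_antisymm prob_le_one
    calc (1:ℝ≥0∞) = μ {x₀} := hμx₀.symm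
      _ ≤ μ t := measure_mono (singleton_subset_iff.mpr h)
  · rw [Set.indicator_of_notMem h]
    refine measure_mono_null (t := ({x₀}ᶜ : Set XX)) ?_ hcompl0
    intro z hz
    simp only [mem_compl_iff, mem_singleton_iff]
    rintro rfl
    exact h hz
lemma lp_dirac {X : Type*} [MeasurableSpace X] [MetricSpace X] [OpensMeasurableSpace X]
    (x y : X) (h1 : edist x y ≤ 1) :
    levyProkhorovEDist (Measure.dirac x) (Measure.dirac y) = edist x y := by
  apply le_antisymm
  · apply levyProkhorovEDist_le_of_forall
    intro ε B hε hεtop hB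
    have key : ∀ a b : X, edist a b < ε →
        Measure.dirac a B ≤ Measure.dirac b (thickening ε.toReal B) + ε := by
      intro a b hab
      by_cases ha : a ∈ B
      · have hb : b ∈ thickening ε.toReal B := by
          rw [mem_thickening_iff]
          refine ⟨a, ha, ?_⟩
          have h2 : (edist b a).toReal < ε.toReal :=
            (ENNReal.toReal_lt_toReal (edist_ne_top b a) hεtop.ne).mpr (by rwa [edist_comm])
          rwa [← dist_edist] at h2
        rw [Measure.dirac_apply_of_mem hb]
        calc Measure.dirac a B ≤ Measure.dirac a univ := measure_mono (subset_univ B)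
          _ = 1 := Measure.dirac_apply_of_mem (mem_univ a)
          _ ≤ 1 + ε := le_self_add
      · simp [Measure.dirac_apply' a hB, ha]
    exact ⟨key x y hε, key y x (by rwa [edist_comm])⟩
  · refine le_sInf fun ε hε => ?_
    by_contra hlt
    push_neg at hlt
    have hε1 : ε < 1 := lt_of_lt_of_le hlt h1
    have hεtop : ε ≠ ∞ := (hε1.trans one_lt_top).ne
    have h := (hε {x} (measurableSet_singleton x)).1
    have hx1 : Measure.dirac x {x} = 1 := Measure.dirac_apply_of_mem rfl
    have hdd : ε.toReal < dist x y := by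
      have h2 : ε.toReal < (edist x y).toReal :=
        (ENNReal.toReal_lt_toReal hεtop (edist_ne_top x y)).mpr hlt
      rwa [← dist_edist] at h2
    have hynot : y ∉ thickening ε.toReal {x} := by
      intro hy
      obtain ⟨z, hz, hd⟩ := mem_thickening_iff.mp hy
      rw [mem_singleton_iff] at hz
      rw [hz, dist_comm] at hd
      linarith
    rw [hx1, Measure.dirac_apply' y (isOpen_thickening.measurableSet),
      Set.indicator_of_notMem hynot] at h
    simp only [zero_add] at h
    exact absurd (h.trans_lt hε1) (by norm_num)

lemma lp_dirac_dist {X : Type*} [MeasurableSpace X] [MetricSpace X] [OpensMeasurableSpace X]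
    (x y : X) (h1 : edist x y ≤ 1) :
    levyProkhorovDist (Measure.dirac x) (Measure.dirac y) = dist x y := by
  rw [levyProkhorovDist, lp_dirac x y h1, ← dist_edist]

lemma edist_le_one_XX (x y : XX) : edist x y ≤ 1 := by
  rw [edist_dist]
  apply ENNReal.ofReal_le_one.mpr
  rw [Subtype.dist_eq, Real.dist_eq]
  have h1 := x.2.1; have h2 := x.2.2; have h3 := y.2.1; have h4 := y.2.2
  rw [abs_le]; constructor <;> linarith


end AuxLemmas

/-- for an order-preserving homeomorphism `f` of `[0,1]`, the map `x ↦ δ_x` is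
a bijective isometry from the fixed-point set `Fix(f)` (Euclidean metric) onto the set of
`f`-invariant ergodic Borel probability measures with the Lévy–Prokhorov metric. -/
theorem dirac_isometry_fixedPoints_onto_ergodicMeasures
    (f : (Set.Icc (0:ℝ) 1) ≃ₜ (Set.Icc (0:ℝ) 1)) (hf : StrictMono f) :
    Isometry (fun x : {x : Set.Icc (0:ℝ) 1 // f x = x} =>
        ((LevyProkhorov.toMeasureEquiv (α := ProbabilityMeasure (Set.Icc (0:ℝ) 1))).symm
          (MeasureTheory.diracProba (x : Set.Icc (0:ℝ) 1)))) ∧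
    Function.Injective (fun x : {x : Set.Icc (0:ℝ) 1 // f x = x} =>
        ((LevyProkhorov.toMeasureEquiv (α := ProbabilityMeasure (Set.Icc (0:ℝ) 1))).symm
          (MeasureTheory.diracProba (x : Set.Icc (0:ℝ) 1)))) ∧
    Set.range (fun x : {x : Set.Icc (0:ℝ) 1 // f x = x} =>
        ((LevyProkhorov.toMeasureEquiv (α := ProbabilityMeasure (Set.Icc (0:ℝ) 1))).symm
          (MeasureTheory.diracProba (x : Set.Icc (0:ℝ) 1)))) = ergodicMeasures (⇑f) := by
  have hiso : Isometry (fun x : {x : Set.Icc (0:ℝ) 1 // f x = x} =>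
        ((LevyProkhorov.toMeasureEquiv (α := ProbabilityMeasure (Set.Icc (0:ℝ) 1))).symm
          (MeasureTheory.diracProba (x : Set.Icc (0:ℝ) 1)))) := by
    apply Isometry.of_dist_eq
    intro p q
    have : dist ((LevyProkhorov.toMeasureEquiv (α := ProbabilityMeasure XX)).symm (diracProba (p : XX)))
        ((LevyProkhorov.toMeasureEquiv (α := ProbabilityMeasure XX)).symm (diracProba (q : XX)))
        = levyProkhorovDist (Measure.dirac (p : XX)) (Measure.dirac (q : XX)) := rfl
    rw [this, lp_dirac_dist _ _ (edist_le_one_XX _ _)]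
    exact (Subtype.dist_eq p q).symm
  refine ⟨hiso, hiso.injective, ?_⟩
  ext μ
  simp only [mem_range, ergodicMeasures, mem_setOf_eq]
  constructor
  · rintro ⟨⟨x, hx⟩, rfl⟩
    exact dirac_ergodic_aux f hx
  · intro hμ
    have hPM : IsProbabilityMeasure
        ((LevyProkhorov.toMeasureEquiv (α := ProbabilityMeasure XX) μ : ProbabilityMeasure XX) : Measure XX) :=
      (LevyProkhorov.toMeasureEquiv (α := ProbabilityMeasure XX) μ : ProbabilityMeasure XX).2
    obtain ⟨x, hfx, hμx⟩ := ergodic_eq_dirac f hf _ hμ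
    refine ⟨⟨x, hfx⟩, ?_⟩
    show (LevyProkhorov.toMeasureEquiv (α := ProbabilityMeasure XX)).symm (diracProba x) = μ
    have : diracProba x = (LevyProkhorov.toMeasureEquiv (α := ProbabilityMeasure XX) μ : ProbabilityMeasure XX) :=
      Subtype.ext hμx.symm
    rw [this]
    rfl
end
end

section
/- Let f be an orientation-preserving homeomorphism of the circle S¹ = ℝ/ℤ whose rotation number is rational. Then f has a periodic point, there exists m ∈ ℕ such that every periodic point of f has minimal period m, and every f-invariant ergodic Borel probability measure equals the uniform measure (1/m) Σ_{i=0}^{m−1} δ_{fⁱ(P)} supported on the orbit of some periodic point P of f. -/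
open MeasureTheory Filter Metric Set Topology ENNReal

private lemma aux_fix_of_iterate_fix {g : ℝ → ℝ} (hg : StrictMono g) {x : ℝ} {s : ℕ}
    (hs : 0 < s) (h : g^[s] x = x) : g x = x := by
  rcases lt_trichotomy (g x) x with hlt | he | hgt
  · exfalso
    have key : ∀ n : ℕ, g^[n + 1] x < x := by
      intro n
      induction n with
      | zero => simpa using hlt
      | succ k ih =>
        have h2 : g (g^[k + 1] x) < g x := hg ih
        rw [← Function.iterate_succ_apply' g (k + 1) x] at h2
        exact h2.trans hlt
    obtain ⟨t, rfl⟩ : ∃ t, s = t + 1 := ⟨s - 1, (Nat.succ_pred_eq_of_pos hs).symm⟩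
    exact absurd h (ne_of_lt (key t))
  · exact he
  · exfalso
    have key : ∀ n : ℕ, x < g^[n + 1] x := by
      intro n
      induction n with
      | zero => simpa using hgt
      | succ k ih =>
        have h2 : g x < g (g^[k + 1] x) := hg ih
        rw [← Function.iterate_succ_apply' g (k + 1) x] at h2
        exact hgt.trans h2
    obtain ⟨t, rfl⟩ : ∃ t, s = t + 1 := ⟨s - 1, (Nat.succ_pred_eq_of_pos hs).symm⟩
    exact absurd h (ne_of_gt (key t))

private lemma aux_eq_limit_of_frequently {α : Type*} [TopologicalSpace α] [T2Space α]
    {u : ℕ → α} {l x : α} (h : Tendsto u atTop (𝓝 l))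
    (hf : ∀ s ∈ 𝓝 x, ∃ᶠ n in atTop, u n ∈ s) : x = l := by
  by_contra hne
  obtain ⟨U, V, hU, hV, hxU, hlV, hd⟩ := t2_separation hne
  have h2 : ∀ᶠ n in atTop, u n ∈ V := h (hV.mem_nhds hlV)
  obtain ⟨n, h1, h2⟩ := ((hf U (hU.mem_nhds hxU)).and_eventually h2).exists
  exact Set.disjoint_left.mp hd h1 h2

/-- an orientation-preserving circle homeomorphism with rational rotation
number has a periodic point, all periodic points have the same minimal period `m`, and
every ergodic invariant Borel probability measure is the uniform measure on the orbit of a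
periodic point. -/
theorem ergodicMeasures_of_rationalRotationNumber_circle
    [MeasurableSpace (AddCircle (1:ℝ))] [BorelSpace (AddCircle (1:ℝ))]
    (f : AddCircle (1:ℝ) ≃ₜ AddCircle (1:ℝ))
    (F : ℝ → ℝ) (hF_mono : StrictMono F) (hF_deg : ∀ x : ℝ, F (x + 1) = F x + 1)
    (hF_lift : ∀ x : ℝ, f (x : AddCircle (1:ℝ)) = ((F x : ℝ) : AddCircle (1:ℝ)))
    (hρ : ∃ r : ℚ, Filter.Tendsto (fun n : ℕ => F^[n] 0 / (n : ℝ)) Filter.atTop (𝓝 (r : ℝ))) :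
    (∃ (x : AddCircle (1:ℝ)) (n : ℕ), 0 < n ∧ (⇑f)^[n] x = x) ∧
    ∃ m : ℕ, 0 < m ∧
      (∀ x : AddCircle (1:ℝ), (∃ n : ℕ, 0 < n ∧ (⇑f)^[n] x = x) →
        Function.minimalPeriod (⇑f) x = m) ∧
      (∀ ν : Measure (AddCircle (1:ℝ)), IsProbabilityMeasure ν → Ergodic (⇑f) ν →
        ∃ P : AddCircle (1:ℝ), (⇑f)^[m] P = P ∧
          ν = (m : ℝ≥0∞)⁻¹ • ∑ i ∈ Finset.range m, Measure.dirac ((⇑f)^[i] P)) := by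
  obtain ⟨r, hr⟩ := hρ
  set G : CircleDeg1Lift := ⟨⟨F, hF_mono.monotone⟩, hF_deg⟩ with hGdef
  have hGF : ⇑G = F := rfl
  -- basic facts about the projection ℝ → AddCircle 1
  have hcoe_int : ∀ (y : ℝ) (k : ℤ), ((y + k : ℝ) : AddCircle (1:ℝ)) = (y : AddCircle (1:ℝ)) := by
    intro y k
    rw [QuotientAddGroup.eq]
    refine AddSubgroup.mem_zmultiples_iff.mpr ⟨-k, ?_⟩
    rw [zsmul_eq_mul, mul_one]
    push_cast
    ring
  have hcoe_eq : ∀ u v : ℝ, (u : AddCircle (1:ℝ)) = (v : AddCircle (1:ℝ)) → ∃ k : ℤ, v = u + k := by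
    intro u v h
    obtain ⟨k, hk⟩ := AddSubgroup.mem_zmultiples_iff.mp ((QuotientAddGroup.eq).mp h)
    refine ⟨k, ?_⟩
    rw [zsmul_eq_mul, mul_one] at hk
    linarith
  have hcoe_surj : Function.Surjective (fun y : ℝ => (y : AddCircle (1:ℝ))) :=
    QuotientAddGroup.mk_surjective
  have hπ : ∀ (y : ℝ) (n : ℕ),
      (⇑f)^[n] (y : AddCircle (1:ℝ)) = ((F^[n] y : ℝ) : AddCircle (1:ℝ)) := by
    intro y n
    induction n with
    | zero => simp
    | succ k ih => rw [Function.iterate_succ_apply', ih, hF_lift, Function.iterate_succ_apply']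
  -- F is surjective, hence continuous
  have hsurj : Function.Surjective F := by
    intro y
    obtain ⟨c, hc⟩ := f.surjective ((y : ℝ) : AddCircle (1:ℝ))
    obtain ⟨x, rfl⟩ := hcoe_surj c
    obtain ⟨k, hk⟩ := hcoe_eq (F x) y (by rw [← hF_lift, hc])
    refine ⟨x + k, ?_⟩
    have := G.map_add_int x k
    rw [hGF] at this
    rw [this, ← hk]
  have hcont : Continuous F := by
    have h := (StrictMono.orderIsoOfSurjective F hF_mono hsurj).continuous
    rwa [StrictMono.coe_orderIsoOfSurjective] at h
  -- translation number
  have hτ : CircleDeg1Lift.translationNumber G = (r : ℝ) := by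
    refine tendsto_nhds_unique ?_ hr
    have h := G.tendsto_translation_number₀
    simpa only [CircleDeg1Lift.coe_pow, hGF] using h
  set q : ℕ := r.den with hqdef
  set p : ℤ := r.num with hpdef
  have hq : 0 < q := r.pos
  have hq0 : (q : ℝ) ≠ 0 := by positivity
  have hτpq : CircleDeg1Lift.translationNumber G = (p : ℝ) / (q : ℝ) := by
    rw [hτ, Rat.cast_def]
  obtain ⟨a, ha⟩ : ∃ a : ℝ, F^[q] a = a + p := by
    obtain ⟨a, ha⟩ := (G.translationNumber_eq_rat_iff hcont hq).mp hτpq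
    refine ⟨a, ?_⟩
    rwa [CircleDeg1Lift.coe_pow, hGF] at ha
  -- iterates of the auxiliary map t ↦ F^[q] t - p
  have hgit : ∀ (u : ℝ) (j : ℕ),
      (fun t => F^[q] t - (p : ℝ))^[j] u = F^[q * j] u - (((j : ℤ) * p : ℤ) : ℝ) := by
    intro u j
    induction j with
    | zero => simp
    | succ k ih =>
      rw [Function.iterate_succ_apply', ih]
      have h2 : F^[q] (F^[q * k] u - (((k : ℤ) * p : ℤ) : ℝ))
          = F^[q] (F^[q * k] u) - (((k : ℤ) * p : ℤ) : ℝ) := by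
        have h3 := (G ^ q).map_sub_int (F^[q * k] u) ((k : ℤ) * p)
        rwa [CircleDeg1Lift.coe_pow, hGF] at h3
      rw [h2, ← Function.iterate_add_apply, show q + q * k = q * (k + 1) by ring]
      push_cast
      ring
  -- the core lemma: periodic points have period exactly q
  have hcore : ∀ (x : AddCircle (1:ℝ)) (n : ℕ), 0 < n → (⇑f)^[n] x = x →
      q ∣ n ∧ (⇑f)^[q] x = x := by
    intro x n hn hx
    obtain ⟨x₀, rfl⟩ := hcoe_surj x
    rw [hπ] at hx
    obtain ⟨k, hk⟩ := hcoe_eq (F^[n] x₀) x₀ hx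
    set k' : ℤ := -k with hk'def
    have hk' : F^[n] x₀ = x₀ + (k' : ℝ) := by push_cast [hk'def]; linarith
    have hτn : CircleDeg1Lift.translationNumber (G ^ n) = (k' : ℝ) := by
      have hGn : (G ^ n) x₀ = x₀ + (k' : ℝ) := by
        have hcp : ⇑(G ^ n) = F^[n] := by rw [CircleDeg1Lift.coe_pow, hGF]
        rw [hcp]
        exact hk'
      exact (G ^ n).translationNumber_of_eq_add_int hGn
    rw [CircleDeg1Lift.translationNumber_pow, hτpq] at hτn
    have hZ : (n : ℤ) * p = k' * q := by
      have h4 : (n : ℝ) * p = k' * q := by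
        field_simp at hτn
        linarith
      exact_mod_cast h4
    have hcop : IsCoprime (q : ℤ) p := by
      rw [Int.isCoprime_iff_gcd_eq_one, Int.gcd, Int.natAbs_natCast]
      exact (Nat.coprime_comm.mp r.reduced)
    have hqn : (q : ℤ) ∣ (n : ℤ) := by
      refine hcop.dvd_of_dvd_mul_right ⟨k', ?_⟩
      rw [hZ]; ring
    have hqnn : q ∣ n := Int.natCast_dvd_natCast.mp hqn
    obtain ⟨s, hs⟩ := hqnn
    have hspos : 0 < s := by
      rcases Nat.eq_zero_or_pos s with rfl | h; · omega
      · exact h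
    have hkp : k' = (s : ℤ) * p := by
      have h5 : (q : ℤ) * ((s : ℤ) * p) = (q : ℤ) * k' := by
        have : (n : ℤ) = (q : ℤ) * s := by exact_mod_cast hs
        calc (q : ℤ) * ((s : ℤ) * p) = (n : ℤ) * p := by rw [this]; ring
          _ = (q : ℤ) * k' := by rw [hZ]; ring
      have hq0' : (q : ℤ) ≠ 0 := by exact_mod_cast hq.ne'
      exact (mul_left_cancel₀ hq0' h5).symm
    have hgfix : (fun t => F^[q] t - (p : ℝ))^[s] x₀ = x₀ := by
      rw [hgit, ← hs, hk', ← hkp]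
      ring
    have hgm : StrictMono (fun t => F^[q] t - (p : ℝ)) := fun u v huv => by
      have := (hF_mono.iterate q) huv
      simpa using sub_lt_sub_right this (p : ℝ)
    have hfix := aux_fix_of_iterate_fix hgm hspos hgfix
    have hFq : F^[q] x₀ = x₀ + (p : ℝ) := by
      linarith
    refine ⟨⟨s, hs⟩, ?_⟩
    rw [hπ, hFq, hcoe_int]
  -- all minimal periods equal q
  have hmin : ∀ x : AddCircle (1:ℝ), (∃ n : ℕ, 0 < n ∧ (⇑f)^[n] x = x) →
      Function.minimalPeriod (⇑f) x = q := by
    rintro x ⟨n, hn, hx⟩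
    obtain ⟨-, hq_per⟩ := hcore x n hn hx
    have hper : Function.IsPeriodicPt (⇑f) q x := hq_per
    have htpos : 0 < Function.minimalPeriod (⇑f) x := hper.minimalPeriod_pos hq
    have h1 : Function.minimalPeriod (⇑f) x ∣ q := hper.minimalPeriod_dvd
    have h2 : q ∣ Function.minimalPeriod (⇑f) x :=
      (hcore x _ htpos (Function.isPeriodicPt_minimalPeriod (⇑f) x)).1
    exact Nat.dvd_antisymm h1 h2
  refine ⟨⟨(a : AddCircle (1:ℝ)), q, hq, by rw [hπ, ha, hcoe_int]⟩, q, hq, hmin, ?_⟩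
  intro ν hνp hνe
  have hmp : MeasurePreserving (⇑f) ν ν := hνe.toMeasurePreserving
  have hmpq : MeasurePreserving ((⇑f)^[q]) ν ν := hmp.iterate q
  have hfc : Continuous (⇑f) := f.continuous
  have hsing : ∀ w : AddCircle (1:ℝ), MeasurableSet ({w} : Set (AddCircle (1:ℝ))) :=
    fun w => isClosed_singleton.measurableSet
  set Fix : Set (AddCircle (1:ℝ)) := {x | (⇑f)^[q] x = x} with hFixdef
  have hFixm : MeasurableSet Fix := (isClosed_eq (hfc.iterate q) continuous_id).measurableSet
  -- a.e. point is in Fix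
  have hFix1 : ν Fixᶜ = 0 := by
    have hclaim : ∀ x : AddCircle (1:ℝ),
        (∀ s ∈ 𝓝 x, ∃ᶠ n in atTop, ((⇑f)^[q])^[n] x ∈ s) → x ∈ Fix := by
      intro x hx
      obtain ⟨u, rfl⟩ := hcoe_surj x
      set x₀ : ℝ := u - (⌊u - a⌋ : ℝ) with hx₀def
      have hx₀eq : ((u : ℝ) : AddCircle (1:ℝ)) = ((x₀ : ℝ) : AddCircle (1:ℝ)) := by
        have h := hcoe_int x₀ ⌊u - a⌋
        rw [show x₀ + (⌊u - a⌋ : ℝ) = u by rw [hx₀def]; ring] at h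
        exact h
      have hfl := Int.floor_le (u - a)
      have hfl2 := Int.lt_floor_add_one (u - a)
      have hlb : a ≤ x₀ := by rw [hx₀def]; linarith
      have hub : x₀ < a + 1 := by rw [hx₀def]; linarith
      set g : ℝ → ℝ := fun t => F^[q] t - (p : ℝ) with hgdef
      have hgm : StrictMono g := fun s t hst => by
        have := (hF_mono.iterate q) hst
        simpa [hgdef] using sub_lt_sub_right this (p : ℝ)
      have hga : g a = a := by rw [hgdef]; simp [ha]
      have hga1 : g (a + 1) = a + 1 := by
        have h7 := (G ^ q).map_add_one a
        rw [CircleDeg1Lift.coe_pow, hGF] at h7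
        rw [hgdef]; simp only
        rw [h7, ha]; ring
      set b : ℕ → ℝ := fun n => g^[n] x₀ with hbdef
      have hbmem : ∀ n, a ≤ b n ∧ b n ≤ a + 1 := by
        intro n
        induction n with
        | zero => exact ⟨hlb, hub.le⟩
        | succ k ih =>
          have h8 : b (k + 1) = g (b k) := Function.iterate_succ_apply' g k x₀
          constructor
          · rw [h8, ← hga]; exact hgm.monotone ih.1
          · rw [h8, ← hga1]; exact hgm.monotone ih.2
      obtain ⟨L, hL, hgfix⟩ : ∃ L : ℝ, Tendsto b atTop (𝓝 L) ∧ (L = x₀ → g x₀ = x₀) := by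
        rcases le_total x₀ (g x₀) with hcase | hcase
        · have hmono : Monotone b := by
            refine monotone_nat_of_le_succ fun n => ?_
            have h9 : b (n + 1) = g^[n] (g x₀) := Function.iterate_succ_apply g n x₀
            show b n ≤ b (n + 1)
            rw [h9, hbdef]
            exact (hgm.monotone.iterate n) hcase
          have hbd : BddAbove (Set.range b) := ⟨a + 1, by rintro _ ⟨n, rfl⟩; exact (hbmem n).2⟩
          refine ⟨⨆ n, b n, tendsto_atTop_ciSup hmono hbd, fun hLx => ?_⟩
          have h10 : b 1 ≤ ⨆ n, b n := le_ciSup hbd 1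
          have h11 : b 1 = g x₀ := by rw [hbdef]; simp
          rw [hLx] at h10
          rw [h11] at h10
          exact le_antisymm h10 hcase
        · have hanti : Antitone b := by
            refine antitone_nat_of_succ_le fun n => ?_
            have h9 : b (n + 1) = g^[n] (g x₀) := Function.iterate_succ_apply g n x₀
            show b (n + 1) ≤ b n
            rw [h9, hbdef]
            exact (hgm.monotone.iterate n) hcase
          have hbd : BddBelow (Set.range b) := ⟨a, by rintro _ ⟨n, rfl⟩; exact (hbmem n).1⟩
          refine ⟨⨅ n, b n, tendsto_atTop_ciInf hanti hbd, fun hLx => ?_⟩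
          have h10 : (⨅ n, b n) ≤ b 1 := ciInf_le hbd 1
          have h11 : b 1 = g x₀ := by rw [hbdef]; simp
          rw [hLx] at h10
          rw [h11] at h10
          exact le_antisymm hcase h10
      have haL : a ≤ L := ge_of_tendsto' hL fun n => (hbmem n).1
      have hL1 : L ≤ a + 1 := le_of_tendsto' hL fun n => (hbmem n).2
      have hπb : ∀ n : ℕ,
          ((b n : ℝ) : AddCircle (1:ℝ)) = ((⇑f)^[q])^[n] ((u : ℝ) : AddCircle (1:ℝ)) := by
        intro n
        have h12 : b n = F^[q * n] x₀ + ((-((n : ℤ) * p) : ℤ) : ℝ) := by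
          rw [hbdef]
          show g^[n] x₀ = _
          rw [hgdef, hgit]; push_cast; ring
        rw [h12, hcoe_int (F^[q * n] x₀) (-((n : ℤ) * p)), ← hπ, Function.iterate_mul, hx₀eq]
      have hconv : Tendsto (fun n => ((⇑f)^[q])^[n] ((u : ℝ) : AddCircle (1:ℝ))) atTop
          (𝓝 ((L : ℝ) : AddCircle (1:ℝ))) := by
        have hcc : Continuous (fun t : ℝ => ((t : ℝ) : AddCircle (1:ℝ))) :=
          AddCircle.continuous_mk' 1
        have h13 := (hcc.tendsto L).comp hL
        refine h13.congr fun n => ?_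
        exact hπb n
      have hxL : ((u : ℝ) : AddCircle (1:ℝ)) = ((L : ℝ) : AddCircle (1:ℝ)) :=
        aux_eq_limit_of_frequently hconv hx
      obtain ⟨k, hk⟩ := hcoe_eq x₀ L (hx₀eq.symm.trans hxL)
      have hk01 : k = 0 ∨ k = 1 := by
        have hlo : (-1 : ℝ) < (k : ℝ) := by linarith
        have hhi : (k : ℝ) ≤ 1 := by linarith
        have hlo' : (-1 : ℤ) < k := by exact_mod_cast hlo
        have hhi' : k ≤ (1 : ℤ) := by exact_mod_cast hhi
        omega
      have hLx₀ : L = x₀ := by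
        rcases hk01 with rfl | rfl
        · simpa using hk
        · exfalso
          have hxa : x₀ = a := by
            push_cast at hk
            linarith
          have hba : ∀ n, b n = a := by
            intro n
            rw [hbdef]
            show g^[n] x₀ = a
            rw [hxa]
            exact Function.iterate_fixed hga n
          have h14 : Tendsto b atTop (𝓝 a) := by
            rw [funext hba]
            exact tendsto_const_nhds
          have hLa : L = a := tendsto_nhds_unique hL h14
          push_cast at hk
          linarith
      have hgx := hgfix hLx₀
      have hFq : F^[q] x₀ = x₀ + (p : ℝ) := by
        rw [hgdef] at hgx
        simp only at hgx
        linarith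
      show (⇑f)^[q] ((u : ℝ) : AddCircle (1:ℝ)) = ((u : ℝ) : AddCircle (1:ℝ))
      rw [hx₀eq, hπ, hFq, hcoe_int]
    have hae : ∀ᵐ x ∂ν, x ∈ Fix := (hmpq.conservative.ae_frequently_mem_of_mem_nhds).mono hclaim
    have h15 := ae_iff.mp hae
    simpa [Set.compl_def] using h15
  -- there is a point all of whose neighborhoods have positive measure
  have hsupp : ∃ z : AddCircle (1:ℝ),
      ∀ U : Set (AddCircle (1:ℝ)), IsOpen U → z ∈ U → ν U ≠ 0 := by
    by_contra hcon
    push_neg at hcon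
    choose U hUo hUz hU0 using hcon
    obtain ⟨t, ht⟩ := isCompact_univ.elim_finite_subcover U hUo
      (fun z _ => Set.mem_iUnion.mpr ⟨z, hUz z⟩)
    have h13 : ν (⋃ z ∈ t, U z) = 0 :=
      (measure_biUnion_null_iff t.countable_toSet).mpr fun z _ => hU0 z
    have h14 : ν Set.univ = 0 := measure_mono_null ht h13
    rw [measure_univ] at h14
    exact one_ne_zero h14
  have hq0' : (q : ℝ≥0∞) ≠ 0 := by exact_mod_cast hq.ne'
  have hqtop : (q : ℝ≥0∞) ≠ ∞ := ENNReal.natCast_ne_top q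
  by_cases hat : ∃ w : AddCircle (1:ℝ), ν {w} ≠ 0
  · -- atomic case: the measure is uniform on a periodic orbit
    obtain ⟨w, hw⟩ := hat
    have hwFix : (⇑f)^[q] w = w := by
      by_contra hne
      exact hw (measure_mono_null (Set.singleton_subset_iff.mpr hne) hFix1)
    have hwmin : Function.minimalPeriod (⇑f) w = q := hmin w ⟨q, hq, hwFix⟩
    have hinj : ∀ n : ℕ, Function.Injective ((⇑f)^[n]) := fun n => f.injective.iterate n
    have hdist : ∀ i j : ℕ, i < q → j < q → i ≠ j → (⇑f)^[i] w ≠ (⇑f)^[j] w := by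
      have key : ∀ i j : ℕ, i < j → j < q → (⇑f)^[i] w ≠ (⇑f)^[j] w := by
        intro i j hij hj he
        have h15 : (⇑f)^[j - i] w = w := by
          apply hinj i
          rw [← Function.iterate_add_apply, show i + (j - i) = j by omega, ← he]
        have h16 : Function.IsPeriodicPt (⇑f) (j - i) w := h15
        have h17 := h16.minimalPeriod_le (by omega)
        omega
      intro i j hi hj hij
      rcases lt_or_gt_of_ne hij with h | h
      · exact key i j h hj
      · exact fun he => key j i h hi he.symm
    have hmass : ∀ i : ℕ, ν {(⇑f)^[i] w} = ν {w} := by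
      intro i
      have h17 : ((⇑f)^[i]) ⁻¹' {(⇑f)^[i] w} = {w} := by
        ext y
        simp [Set.mem_preimage, (hinj i).eq_iff]
      calc ν {(⇑f)^[i] w} = ν (((⇑f)^[i]) ⁻¹' {(⇑f)^[i] w}) :=
            ((hmp.iterate i).measure_preimage (hsing _).nullMeasurableSet).symm
        _ = ν {w} := by rw [h17]
    set O : Set (AddCircle (1:ℝ)) := ⋃ i ∈ Finset.range q, {(⇑f)^[i] w} with hOdef
    have hOm : MeasurableSet O := (Finset.range q).measurableSet_biUnion fun i _ => hsing _
    have hdisj : (↑(Finset.range q) : Set ℕ).PairwiseDisjoint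
        (fun i : ℕ => ({(⇑f)^[i] w} : Set (AddCircle (1:ℝ)))) := by
      intro i hi j hj hij
      simp only [Finset.coe_range, Set.mem_Iio] at hi hj
      exact Set.disjoint_singleton.mpr (hdist i j hi hj hij)
    have hνO : ν O = (q : ℝ≥0∞) * ν {w} := by
      rw [hOdef, measure_biUnion_finset hdisj fun i _ => hsing _]
      simp [hmass, Finset.sum_const, Finset.card_range, nsmul_eq_mul]
    have hOinv : (⇑f) ⁻¹' O = O := by
      ext y
      simp only [hOdef, Set.mem_preimage, Set.mem_iUnion, Set.mem_singleton_iff,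
        Finset.mem_range]
      constructor
      · rintro ⟨i, hi, hfy⟩
        rcases Nat.eq_zero_or_pos i with rfl | hipos
        · refine ⟨q - 1, by omega, ?_⟩
          apply f.injective
          rw [hfy, ← Function.iterate_succ_apply' (⇑f) (q - 1) w,
            show (q - 1).succ = q by omega, hwFix]
          simp
        · refine ⟨i - 1, by omega, ?_⟩
          apply f.injective
          rw [hfy, ← Function.iterate_succ_apply' (⇑f) (i - 1) w,
            show (i - 1).succ = i by omega]
      · rintro ⟨i, hi, rfl⟩
        by_cases hiq : i + 1 < q
        · exact ⟨i + 1, hiq, (Function.iterate_succ_apply' (⇑f) i w).symm⟩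
        · refine ⟨0, hq, ?_⟩
          rw [← Function.iterate_succ_apply' (⇑f) i w, show i.succ = q by omega, hwFix]
          simp
    have hsubO : ({w} : Set (AddCircle (1:ℝ))) ⊆ O := by
      intro y hy
      rw [hOdef]
      refine Set.mem_biUnion (Finset.mem_range.mpr hq) ?_
      simpa using hy
    have hν1 : ν O = 1 := by
      rcases hνe.ae_empty_or_univ hOm hOinv with h | h
      · exfalso
        have h18 : ν O = 0 := by rw [measure_congr h, measure_empty]
        exact hw (measure_mono_null hsubO h18)
      · rw [measure_congr h, measure_univ]
    have hc : ν {w} = (q : ℝ≥0∞)⁻¹ := by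
      have h19 : (q : ℝ≥0∞) * ν {w} = 1 := hνO.symm.trans hν1
      calc ν {w} = (q : ℝ≥0∞)⁻¹ * ((q : ℝ≥0∞) * ν {w}) := by
            rw [← mul_assoc, ENNReal.inv_mul_cancel hq0' hqtop, one_mul]
        _ = (q : ℝ≥0∞)⁻¹ := by rw [h19, mul_one]
    refine ⟨w, hwFix, ?_⟩
    ext s hs
    have hOc : ν Oᶜ = 0 := by
      have h20 := measure_compl hOm (measure_ne_top ν O)
      rw [hν1, measure_univ, tsub_self] at h20
      exact h20
    have hsplit : ν s = ν (s ∩ O) := by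
      have h21 := measure_inter_add_diff (μ := ν) s hOm
      have h22 : ν (s \ O) = 0 := measure_mono_null (Set.diff_subset_compl s O) hOc
      rw [← h21, h22, add_zero]
    have hsO : s ∩ O = ⋃ i ∈ Finset.range q, (s ∩ {(⇑f)^[i] w}) := by
      rw [hOdef, Set.inter_iUnion₂]
    rw [Measure.smul_apply, smul_eq_mul, Measure.finset_sum_apply]
    simp only [Measure.dirac_apply' _ hs]
    rw [hsplit, hsO, measure_biUnion_finset
      (hdisj.mono_on fun i _ => Set.inter_subset_right)
      (fun i _ => hs.inter (hsing _)), Finset.mul_sum]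
    refine Finset.sum_congr rfl fun i _ => ?_
    by_cases hpt : (⇑f)^[i] w ∈ s
    · rw [Set.inter_eq_self_of_subset_right (Set.singleton_subset_iff.mpr hpt),
        hmass i, hc, Set.indicator_of_mem hpt]
      simp
    · have h23 : s ∩ ({(⇑f)^[i] w} : Set (AddCircle (1:ℝ))) = ∅ := by
        ext y
        simp only [Set.mem_inter_iff, Set.mem_singleton_iff, Set.mem_empty_iff_false,
          iff_false, not_and]
        rintro hy rfl
        exact hpt hy
      rw [h23, measure_empty, Set.indicator_of_notMem hpt, mul_zero]
  · -- non-atomic case is impossible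
    exfalso
    push_neg at hat
    obtain ⟨z, hz⟩ := hsupp
    -- find a small open neighborhood of z
    obtain ⟨U, hUo, hUz, hUsmall⟩ : ∃ U : Set (AddCircle (1:ℝ)),
        IsOpen U ∧ z ∈ U ∧ ν U < (q : ℝ≥0∞)⁻¹ := by
      obtain ⟨sB, hsB⟩ := (𝓝 z).exists_antitone_basis
      set t : ℕ → Set (AddCircle (1:ℝ)) := fun n => interior (sB n) with htdef
      have htm : ∀ n, t n ∈ 𝓝 z := fun n =>
        interior_mem_nhds.mpr (hsB.toHasBasis.mem_of_mem trivial)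
      have hant : Antitone t := fun i j hij => interior_mono (hsB.antitone hij)
      have hiInt : (⋂ n, t n) = {z} := by
        refine Set.Subset.antisymm ?_ ?_
        · intro y hy
          by_contra hyz
          obtain ⟨n, -, hn⟩ := hsB.toHasBasis.mem_iff.mp
            (isOpen_compl_singleton.mem_nhds (by simpa [Set.mem_compl_iff] using Ne.symm hyz))
          have : y ∈ sB n := interior_subset (Set.mem_iInter.mp hy n)
          exact hn this rfl
        · intro y hy
          simp only [Set.mem_singleton_iff] at hy
          subst hy
          exact Set.mem_iInter.mpr fun n => mem_of_mem_nhds (htm n)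
      have hten : Tendsto (fun n => ν (t n)) atTop (𝓝 (ν {z})) := by
        have := tendsto_measure_iInter_atTop
          (fun n => (isOpen_interior.measurableSet).nullMeasurableSet) hant
          ⟨0, measure_ne_top ν _⟩
        rwa [hiInt] at this
      rw [hat z] at hten
      have hpos : (0 : ℝ≥0∞) < (q : ℝ≥0∞)⁻¹ := ENNReal.inv_pos.mpr hqtop
      obtain ⟨n, hn⟩ := (hten.eventually (gt_mem_nhds hpos)).exists
      exact ⟨t n, isOpen_interior, mem_of_mem_nhds (htm n), hn⟩
    set E : Set (AddCircle (1:ℝ)) := U ∩ Fix with hEdef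
    have hEm : MeasurableSet E := hUo.measurableSet.inter hFixm
    have hEν : ν U = ν E := by
      have h24 := measure_inter_add_diff (μ := ν) U hFixm
      have h25 : ν (U \ Fix) = 0 := measure_mono_null (Set.diff_subset_compl U Fix) hFix1
      rw [← h24, h25, add_zero]
    have hE0 : ν E ≠ 0 := fun h => hz U hUo hUz (by rw [hEν, h])
    have hEsmall : ν E < (q : ℝ≥0∞)⁻¹ := hEν ▸ hUsmall
    have hinj : ∀ n : ℕ, Function.Injective ((⇑f)^[n]) := fun n => f.injective.iterate n
    have hLI : ∀ n : ℕ, Function.LeftInverse ((⇑f.symm)^[n]) ((⇑f)^[n]) :=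
      fun n => (Function.LeftInverse.iterate f.symm_apply_apply n)
    have hRI : ∀ n : ℕ, Function.LeftInverse ((⇑f)^[n]) ((⇑f.symm)^[n]) :=
      fun n => (Function.LeftInverse.iterate f.apply_symm_apply n)
    have himg : ∀ i : ℕ, (⇑f)^[i] '' E = ((⇑f.symm)^[i]) ⁻¹' E := by
      intro i
      ext y
      constructor
      · rintro ⟨e, he, rfl⟩
        simpa [Set.mem_preimage, hLI i e] using he
      · intro hy
        exact ⟨(⇑f.symm)^[i] y, hy, hRI i y⟩
    have himgm : ∀ i : ℕ, MeasurableSet ((⇑f)^[i] '' E) := by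
      intro i
      rw [himg]
      exact (f.symm.continuous.measurable.iterate i) hEm
    have hνim : ∀ i : ℕ, ν ((⇑f)^[i] '' E) = ν E := by
      intro i
      have h26 := (hmp.iterate i).measure_preimage (himgm i).nullMeasurableSet
      rw [Set.preimage_image_eq E (hinj i)] at h26
      exact h26.symm
    set S : Set (AddCircle (1:ℝ)) := ⋃ i ∈ Finset.range q, (⇑f)^[i] '' E with hSdef
    have hSm : MeasurableSet S := (Finset.range q).measurableSet_biUnion fun i _ => himgm i
    have hES : E ⊆ S := by
      intro y hy
      rw [hSdef]
      refine Set.mem_biUnion (Finset.mem_range.mpr hq) ?_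
      simpa using hy
    have hEFix : ∀ e ∈ E, (⇑f)^[q] e = e := fun e he => he.2
    have hSinv : (⇑f) ⁻¹' S = S := by
      ext y
      simp only [hSdef, Set.mem_preimage, Set.mem_iUnion, Finset.mem_range, Set.mem_image]
      constructor
      · rintro ⟨i, hi, e, he, hfe⟩
        rcases Nat.eq_zero_or_pos i with rfl | hipos
        · refine ⟨q - 1, by omega, e, he, ?_⟩
          apply f.injective
          rw [← Function.iterate_succ_apply' (⇑f) (q - 1) e, show (q - 1).succ = q by omega,
            hEFix e he, ← hfe]
          simp
        · refine ⟨i - 1, by omega, e, he, ?_⟩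
          apply f.injective
          rw [← Function.iterate_succ_apply' (⇑f) (i - 1) e, show (i - 1).succ = i by omega, ← hfe]
      · rintro ⟨i, hi, e, he, rfl⟩
        by_cases hiq : i + 1 < q
        · exact ⟨i + 1, hiq, e, he, Function.iterate_succ_apply' (⇑f) i e⟩
        · refine ⟨0, hq, e, he, ?_⟩
          rw [← Function.iterate_succ_apply' (⇑f) i e, show i.succ = q by omega, hEFix e he]
          simp
    have hSlt : ν S < 1 := by
      have h27 : ν S ≤ ∑ i ∈ Finset.range q, ν ((⇑f)^[i] '' E) :=
        measure_biUnion_finset_le (Finset.range q) _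
      have h28 : ∑ i ∈ Finset.range q, ν ((⇑f)^[i] '' E) = (q : ℝ≥0∞) * ν E := by
        simp [hνim, Finset.sum_const, Finset.card_range, nsmul_eq_mul]
      have h29 : (q : ℝ≥0∞) * ν E < (q : ℝ≥0∞) * (q : ℝ≥0∞)⁻¹ :=
        ENNReal.mul_lt_mul_right hq0' hqtop hEsmall
      rw [ENNReal.mul_inv_cancel hq0' hqtop] at h29
      calc ν S ≤ (q : ℝ≥0∞) * ν E := h27.trans (le_of_eq h28)
        _ < 1 := h29
    rcases hνe.ae_empty_or_univ hSm hSinv with h | h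
    · have h30 : ν S = 0 := by rw [measure_congr h, measure_empty]
      exact hE0 (measure_mono_null hES h30)
    · have h31 : ν S = 1 := by rw [measure_congr h, measure_univ]
      exact absurd h31 (ne_of_lt hSlt)
end

section
/- Let (Z,d) be a compact metric space. Then the upper metric order has the intermediate value property on subsets of Z: for every β ∈ [0,∞] with β ≤ mo⁺(Z), there exists a subset Y ⊆ Z such that mo⁺(Y) = β. -/
open Filter Metric Set Topology

noncomputable section

/-- Maximal cardinality of an `ε`-separated subset of `Y` (as `ℕ∞`). -/
def sepNum {M : Type*} [PseudoMetricSpace M] (Y : Set M) (ε : ℝ) : ℕ∞ :=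
  ⨆ (s : Finset M) (_ : ↑s ⊆ Y ∧ ∀ x ∈ s, ∀ y ∈ s, x ≠ y → ε ≤ dist x y), (s.card : ℕ∞)

/-- Upper metric order: `mo⁺(Y) = limsup_{ε→0⁺} log log S_Y(ε) / (−log ε)`. -/
def upperMetricOrder {M : Type*} [PseudoMetricSpace M] (Y : Set M) : EReal :=
  Filter.limsup
    (fun ε : ℝ => ((Real.log (Real.log ((sepNum Y ε).toNat : ℝ)) / (-Real.log ε) : ℝ) : EReal))
    (𝓝[>] (0:ℝ))

namespace IVT13

variable {Z : Type*} [MetricSpace Z]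

/-- `s` is an `ε`-separated finset. -/
def IsSep (ε : ℝ) (s : Finset Z) : Prop :=
  ∀ x ∈ s, ∀ y ∈ s, x ≠ y → ε ≤ dist x y

lemma IsSep.subset {ε : ℝ} {s t : Finset Z} (h : IsSep ε s) (hts : t ⊆ s) : IsSep ε t :=
  fun x hx y hy hxy => h x (hts hx) y (hts hy) hxy

lemma IsSep.mono {ε δ : ℝ} {s : Finset Z} (h : IsSep ε s) (hδ : δ ≤ ε) : IsSep δ s :=
  fun x hx y hy hxy => hδ.trans (h x hx y hy hxy)

lemma card_le_sepNum {Y : Set Z} {ε : ℝ} {s : Finset Z} (hs : ↑s ⊆ Y) (hsep : IsSep ε s) :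
    (s.card : ℕ∞) ≤ sepNum Y ε :=
  le_iSup₂ (f := fun (s : Finset Z) (_ : ↑s ⊆ Y ∧ ∀ x ∈ s, ∀ y ∈ s, x ≠ y → ε ≤ dist x y) =>
    (s.card : ℕ∞)) s ⟨hs, hsep⟩

lemma sepNum_le_of_forall {Y : Set Z} {ε : ℝ} {K : ℕ}
    (h : ∀ s : Finset Z, ↑s ⊆ Y → IsSep ε s → s.card ≤ K) :
    sepNum Y ε ≤ (K : ℕ∞) := by
  refine iSup₂_le fun s hs => ?_
  exact_mod_cast h s hs.1 hs.2

lemma sepNum_mono {Y Y' : Set Z} {ε : ℝ} (h : Y ⊆ Y') : sepNum Y ε ≤ sepNum Y' ε := by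
  refine iSup₂_le fun s hs => card_le_sepNum (hs.1.trans h) hs.2

lemma exists_finset_of_le_sepNum {Y : Set Z} {ε : ℝ} {N : ℕ}
    (h : (N : ℕ∞) ≤ sepNum Y ε) :
    ∃ s : Finset Z, ↑s ⊆ Y ∧ IsSep ε s ∧ s.card = N := by
  rcases Nat.eq_zero_or_pos N with hN | hN
  · exact ⟨∅, by simp, fun x hx => by simp at hx, by simp [hN]⟩
  · have : ∃ s : Finset Z, ↑s ⊆ Y ∧ IsSep ε s ∧ N ≤ s.card := by
      by_contra hcon
      push_neg at hcon
      have hle : sepNum Y ε ≤ ((N - 1 : ℕ) : ℕ∞) := by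
        refine sepNum_le_of_forall fun s hs hsep => ?_
        have := hcon s hs hsep
        omega
      have := h.trans hle
      have : N ≤ N - 1 := by exact_mod_cast this
      omega
    obtain ⟨s, hsY, hsep, hcard⟩ := this
    obtain ⟨t, hts, htcard⟩ := s.exists_subset_card_eq (n := N) hcard
    exact ⟨t, (Finset.coe_subset.mpr hts).trans hsY, hsep.subset hts, htcard⟩

variable [CompactSpace Z]
set_option linter.unusedSectionVars false

lemma exists_sepNum_bound {ε : ℝ} (hε : 0 < ε) :
    ∃ K : ℕ, ∀ Y : Set Z, sepNum Y ε ≤ (K : ℕ∞) := by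
  obtain ⟨t, -, htfin, hcov⟩ :=
    finite_cover_balls_of_compact (isCompact_univ : IsCompact (univ : Set Z)) (half_pos hε)
  refine ⟨htfin.toFinset.card, fun Y => sepNum_le_of_forall fun s _ hsep => ?_⟩
  have hmem : ∀ x : Z, ∃ y ∈ t, x ∈ ball y (ε/2) := by
    intro x
    have := hcov (mem_univ x)
    simpa using this
  choose f hf1 hf2 using hmem
  refine Finset.card_le_card_of_injOn f (fun a _ => htfin.mem_toFinset.mpr (hf1 a)) ?_
  intro a ha b hb hab
  by_contra hne
  have h1 := hf2 a; have h2 := hf2 b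
  rw [hab] at h1
  have h1' : dist a (f b) < ε / 2 := mem_ball.mp h1
  have h2' : dist b (f b) < ε / 2 := mem_ball.mp h2
  have htri : dist a b ≤ dist a (f b) + dist (f b) b := dist_triangle _ _ _
  have hcomm : dist (f b) b = dist b (f b) := dist_comm _ _
  have hd : dist a b < ε := by linarith
  exact absurd (hsep a ha b hb hne) (by linarith)

/-- real-valued separation number -/
def Sr (Y : Set Z) (ε : ℝ) : ℝ := ((sepNum Y ε).toNat : ℝ)

lemma Sr_nonneg (Y : Set Z) (ε : ℝ) : 0 ≤ Sr Y ε := Nat.cast_nonneg _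

lemma le_Sr {Y : Set Z} {ε : ℝ} (hε : 0 < ε) {s : Finset Z} (hs : ↑s ⊆ Y) (hsep : IsSep ε s) :
    (s.card : ℝ) ≤ Sr Y ε := by
  obtain ⟨K, hK⟩ := exists_sepNum_bound (Z := Z) hε
  have h1 : (s.card : ℕ∞) ≤ sepNum Y ε := card_le_sepNum hs hsep
  have h2 : sepNum Y ε ≠ ⊤ := by
    intro h
    have := hK Y
    rw [h] at this
    exact absurd (top_le_iff.mp this) (by simp)
  have h3 : s.card ≤ (sepNum Y ε).toNat := by
    rw [← ENat.coe_toNat h2] at h1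
    exact_mod_cast h1
  unfold Sr
  exact_mod_cast h3

lemma Sr_le_of_forall {Y : Set Z} {ε : ℝ} {B : ℝ} (hB : 0 ≤ B)
    (h : ∀ s : Finset Z, ↑s ⊆ Y → IsSep ε s → (s.card : ℝ) ≤ B) :
    Sr Y ε ≤ B + 1 := by
  have hs : sepNum Y ε ≤ (⌈B⌉₊ : ℕ∞) := by
    refine sepNum_le_of_forall fun s hsY hsep => ?_
    have := (h s hsY hsep).trans (Nat.le_ceil B)
    exact_mod_cast this
  have : (sepNum Y ε).toNat ≤ ⌈B⌉₊ := by
    rcases eq_or_ne (sepNum Y ε) ⊤ with htop | htop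
    · rw [htop] at hs
      exact absurd (top_le_iff.mp hs) (by simp)
    · rw [← ENat.coe_toNat htop] at hs; exact_mod_cast hs
  have : Sr Y ε ≤ (⌈B⌉₊ : ℝ) := by unfold Sr; exact_mod_cast this
  exact this.trans (Nat.ceil_lt_add_one hB).le

end IVT13
namespace IVT13

variable {Z : Type*} [MetricSpace Z]
set_option linter.unusedSectionVars false
set_option maxHeartbeats 1000000

lemma rpow_neg_anti {x y t : ℝ} (hx : 0 < x) (hxy : x ≤ y) (ht : 0 ≤ t) :
    y ^ (-t) ≤ x ^ (-t) := by
  rw [Real.rpow_neg hx.le, Real.rpow_neg (hx.le.trans hxy)]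
  exact inv_anti₀ (Real.rpow_pos_of_pos hx t) (Real.rpow_le_rpow hx.le hxy ht)

lemma one_le_rpow_neg {x t : ℝ} (hx : 0 < x) (hx1 : x ≤ 1) (ht : 0 ≤ t) : 1 ≤ x ^ (-t) :=
  Real.one_le_rpow_of_pos_of_le_one_of_nonpos hx hx1 (neg_nonpos.mpr ht)

/-- `C` is `γ`-rich. -/
def Rich (C : Set Z) (γ : ℝ) : Prop :=
  ∀ δ : ℝ, 0 < δ → ∃ ε, 0 < ε ∧ ε < δ ∧ ε < 1 ∧
    ∃ s : Finset Z, ↑s ⊆ C ∧ IsSep ε s ∧ Real.exp (ε ^ (-γ)) ≤ (s.card : ℝ)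

lemma Rich.mono_set {C C' : Set Z} {γ : ℝ} (h : Rich C γ) (hsub : C ⊆ C') : Rich C' γ := by
  intro δ hδ
  obtain ⟨ε, h1, h2, h3, s, hs, hsep, hcard⟩ := h δ hδ
  exact ⟨ε, h1, h2, h3, s, hs.trans hsub, hsep, hcard⟩

lemma Rich.mono_exp {C : Set Z} {γ γ' : ℝ} (h : Rich C γ) (hle : γ' ≤ γ) : Rich C γ' := by
  intro δ hδ
  obtain ⟨ε, h1, h2, h3, s, hs, hsep, hcard⟩ := h δ hδ
  refine ⟨ε, h1, h2, h3, s, hs, hsep, le_trans ?_ hcard⟩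
  exact Real.exp_le_exp.mpr
    (Real.rpow_le_rpow_of_exponent_ge h1 h3.le (neg_le_neg hle))

lemma Rich.nonempty {C : Set Z} {γ : ℝ} (h : Rich C γ) : C.Nonempty := by
  obtain ⟨ε, h1, h2, h3, s, hs, hsep, hcard⟩ := h 1 one_pos
  have h4 : 0 < (s.card : ℝ) := lt_of_lt_of_le (Real.exp_pos _) hcard
  have h5 : 0 < s.card := by exact_mod_cast h4
  obtain ⟨x, hx⟩ := Finset.card_pos.mp h5
  exact ⟨x, hs hx⟩

variable [CompactSpace Z]

lemma rich_univ {γ : ℝ} (hγ0 : 0 < γ)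
    (hγ : (γ : EReal) < upperMetricOrder (univ : Set Z)) : Rich (univ : Set Z) γ := by
  intro δ hδ
  have hfreq : ∃ᶠ ε in 𝓝[>] (0:ℝ), (γ : EReal) <
      ((Real.log (Real.log ((sepNum (univ : Set Z) ε).toNat : ℝ)) / (-Real.log ε) : ℝ) : EReal) :=
    frequently_lt_of_lt_limsup (by isBoundedDefault) hγ
  have hmin : 0 < min δ 1 := lt_min hδ one_pos
  have hev : ∀ᶠ ε in 𝓝[>] (0:ℝ), 0 < ε ∧ ε < min δ 1 := by
    filter_upwards [Ioc_mem_nhdsGT_of_mem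
      (show (0:ℝ) ∈ Ico (0:ℝ) (min δ 1 / 2) from ⟨le_rfl, by linarith⟩)] with x hx
    exact ⟨hx.1, lt_of_le_of_lt hx.2 (by linarith)⟩
  obtain ⟨ε, hlt, hε0, hεm⟩ := (hfreq.and_eventually hev).exists
  have hεδ : ε < δ := lt_of_lt_of_le hεm (min_le_left _ _)
  have hε1 : ε < 1 := lt_of_lt_of_le hεm (min_le_right _ _)
  refine ⟨ε, hε0, hεδ, hε1, ?_⟩
  set n : ℕ := (sepNum (univ : Set Z) ε).toNat with hn
  set S : ℝ := (n : ℝ) with hS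
  have ht : 0 < -Real.log ε := by
    have := Real.log_neg hε0 hε1; linarith
  have hltr : γ < Real.log (Real.log S) / (-Real.log ε) := by exact_mod_cast hlt
  have hnum : γ * (-Real.log ε) < Real.log (Real.log S) := by
    rw [lt_div_iff₀ ht] at hltr; linarith
  have hγt : 0 < γ * (-Real.log ε) := mul_pos hγ0 ht
  have key : Real.exp (ε ^ (-γ)) < S := by
    rcases Nat.lt_or_ge n 2 with hn2 | hn2
    · exfalso
      have hlog0 : Real.log S = 0 := by
        interval_cases n
        · simp [hS]
        · simp [hS]
      rw [hlog0, Real.log_zero] at hnum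
      linarith
    · have hS2 : (2:ℝ) ≤ S := by rw [hS]; exact_mod_cast hn2
      have hSpos : (0:ℝ) < S := by linarith
      have hlogS : 0 < Real.log S := Real.log_pos (by linarith)
      have h1 : Real.exp (γ * (-Real.log ε)) < Real.log S := by
        calc Real.exp (γ * (-Real.log ε)) < Real.exp (Real.log (Real.log S)) :=
              Real.exp_lt_exp.mpr hnum
          _ = Real.log S := Real.exp_log hlogS
      have h2 : ε ^ (-γ) = Real.exp (γ * (-Real.log ε)) := by
        rw [Real.rpow_def_of_pos hε0]; ring_nf
      calc Real.exp (ε ^ (-γ)) = Real.exp (Real.exp (γ * (-Real.log ε))) := by rw [h2]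
        _ < Real.exp (Real.log S) := Real.exp_lt_exp.mpr h1
        _ = S := Real.exp_log hSpos
  obtain ⟨s, hsY, hsep, hcard⟩ :=
    exists_finset_of_le_sepNum (Y := (univ : Set Z)) (ε := ε) (N := n)
      (ENat.coe_toNat_le_self _)
  exact ⟨s, hsY, hsep, by rw [hcard]; exact key.le⟩

end IVT13
namespace IVT13

variable {Z : Type*} [MetricSpace Z]
set_option linter.unusedSectionVars false
set_option maxHeartbeats 1000000

open Classical in
lemma Rich.of_cover {C : Set Z} {γ γ' R : ℝ} (hγ' : 0 < γ') (hlt : γ' < γ) (h : Rich C γ)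
    {t : Set Z} (htfin : t.Finite) (hcov : C ⊆ ⋃ y ∈ t, ball y R) :
    ∃ y ∈ t, Rich (ball y R ∩ C) γ' := by
  by_contra hcon
  push_neg at hcon
  have hy : ∀ y ∈ t, ∃ δ : ℝ, 0 < δ ∧ ∀ ε : ℝ, 0 < ε → ε < δ → ε < 1 →
      ∀ s : Finset Z, ↑s ⊆ ball y R ∩ C → IsSep ε s → (s.card : ℝ) < Real.exp (ε ^ (-γ')) := by
    intro y hyt
    have hnr := hcon y hyt
    unfold Rich at hnr
    push_neg at hnr
    obtain ⟨δ, hδ0, hall⟩ := hnr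
    exact ⟨δ, hδ0, fun ε h1 h2 h3 s hs hsep => hall ε h1 h2 h3 s hs hsep⟩
  choose! δf hδf0 hδf using hy
  set F := htfin.toFinset with hF
  have hFne : F.Nonempty := by
    obtain ⟨x, hx⟩ := h.nonempty
    have := hcov hx
    simp only [mem_iUnion] at this
    obtain ⟨y, hyt, -⟩ := this
    exact ⟨y, htfin.mem_toFinset.mpr hyt⟩
  set δ₀ : ℝ := F.inf' hFne δf with hδ₀
  have hδ₀pos : 0 < δ₀ := by
    rw [hδ₀, Finset.lt_inf'_iff]
    exact fun y hy => hδf0 y (htfin.mem_toFinset.mp hy)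
  set L : ℝ := Real.log (2 * F.card) + 1 with hL
  have hcard1 : 1 ≤ (F.card : ℝ) := by
    have := Finset.card_pos.mpr hFne
    exact_mod_cast this
  have hL1 : 1 ≤ L := by
    have : 0 ≤ Real.log (2 * F.card) :=
      Real.log_nonneg (by linarith)
    linarith
  set A2 : ℝ := L ^ (-(γ - γ')⁻¹) with hA2
  have hA2pos : 0 < A2 := Real.rpow_pos_of_pos (by linarith) _
  obtain ⟨ε, hε0, hεlt, hε1, s, hsC, hsep, hbig⟩ :=
    h (min δ₀ A2) (lt_min hδ₀pos hA2pos)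
  have hεδ₀ : ε < δ₀ := lt_of_lt_of_le hεlt (min_le_left _ _)
  have hεA2 : ε ≤ A2 := (lt_of_lt_of_le hεlt (min_le_right _ _)).le
  -- counting
  have hsub : s ⊆ F.biUnion (fun y => s.filter (fun z => z ∈ ball y R)) := by
    intro z hz
    have hzC : z ∈ C := hsC hz
    have := hcov hzC
    simp only [mem_iUnion] at this
    obtain ⟨y, hyt, hzy⟩ := this
    exact Finset.mem_biUnion.mpr ⟨y, htfin.mem_toFinset.mpr hyt, Finset.mem_filter.mpr ⟨hz, hzy⟩⟩
  have hcount : (s.card : ℝ) ≤ (F.card : ℝ) * Real.exp (ε ^ (-γ')) := by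
    have h1 : s.card ≤ ∑ y ∈ F, (s.filter (fun z => z ∈ ball y R)).card :=
      le_trans (Finset.card_le_card hsub) (Finset.card_biUnion_le)
    have h2 : (∑ y ∈ F, ((s.filter (fun z => z ∈ ball y R)).card : ℝ)) ≤
        ∑ _y ∈ F, Real.exp (ε ^ (-γ')) := by
      refine Finset.sum_le_sum fun y hyF => ?_
      have hyt : y ∈ t := htfin.mem_toFinset.mp hyF
      refine (hδf y hyt ε hε0 (lt_of_lt_of_le hεδ₀ (Finset.inf'_le δf hyF)) hε1
        _ ?_ (hsep.subset (Finset.filter_subset _ _))).le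
      intro z hz
      simp only [Finset.coe_filter, Set.mem_setOf_eq] at hz
      exact ⟨hz.2, hsC hz.1⟩
    calc (s.card : ℝ) ≤ ∑ y ∈ F, ((s.filter (fun z => z ∈ ball y R)).card : ℝ) := by
          exact_mod_cast h1
      _ ≤ ∑ _y ∈ F, Real.exp (ε ^ (-γ')) := h2
      _ = (F.card : ℝ) * Real.exp (ε ^ (-γ')) := by
          rw [Finset.sum_const, nsmul_eq_mul]
  -- the threshold estimate: F.card * exp(ε^{-γ'}) < exp(ε^{-γ})
  have hkey : (F.card : ℝ) * Real.exp (ε ^ (-γ')) < Real.exp (ε ^ (-γ)) := by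
    have hgg' : (0:ℝ) < γ - γ' := by linarith
    have hstep1 : L ≤ ε ^ (-(γ - γ')) := by
      have hmono := rpow_neg_anti hε0 hεA2 hgg'.le
      have hab : (-(γ - γ')⁻¹) * (γ - γ') = -1 := by field_simp
      have hLrw : (L ^ (-(γ - γ')⁻¹)) ^ (-(γ - γ')) = L := by
        rw [← Real.rpow_mul (by linarith : (0:ℝ) ≤ L)]
        have : (-(γ - γ')⁻¹) * (-(γ - γ')) = 1 := by
          field_simp
        rw [this, Real.rpow_one]
      calc L = (L ^ (-(γ - γ')⁻¹)) ^ (-(γ - γ')) := hLrw.symm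
        _ = A2 ^ (-(γ - γ')) := by rw [hA2]
        _ ≤ ε ^ (-(γ - γ')) := hmono
    have hone : 1 ≤ ε ^ (-γ') := one_le_rpow_neg hε0 hε1.le hγ'.le
    have hsplit : ε ^ (-γ) = ε ^ (-γ') * ε ^ (-(γ - γ')) := by
      rw [← Real.rpow_add hε0]; ring_nf
    have hineq : Real.log (2 * F.card) + ε ^ (-γ') ≤ ε ^ (-γ) := by
      have h3 : ε ^ (-γ') * L ≤ ε ^ (-γ) := by
        rw [hsplit]
        exact mul_le_mul_of_nonneg_left hstep1 (by linarith)
      have h4 : Real.log (2 * F.card) + ε ^ (-γ') ≤ ε ^ (-γ') * L := by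
        rw [hL]
        have : ε ^ (-γ') * (Real.log (2 * F.card) + 1)
            = ε ^ (-γ') * Real.log (2 * F.card) + ε ^ (-γ') := by ring
        rw [this]
        have hlognn : 0 ≤ Real.log (2 * F.card) := Real.log_nonneg (by linarith)
        nlinarith
      linarith
    have h5 : (2 * F.card : ℝ) * Real.exp (ε ^ (-γ')) ≤ Real.exp (ε ^ (-γ)) := by
      have h2pos : (0:ℝ) < 2 * F.card := by linarith
      calc (2 * F.card : ℝ) * Real.exp (ε ^ (-γ'))
          = Real.exp (Real.log (2 * F.card)) * Real.exp (ε ^ (-γ')) := by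
            rw [Real.exp_log h2pos]
        _ = Real.exp (Real.log (2 * F.card) + ε ^ (-γ')) := (Real.exp_add _ _).symm
        _ ≤ Real.exp (ε ^ (-γ)) := Real.exp_le_exp.mpr hineq
    nlinarith [Real.exp_pos (ε ^ (-γ')), hcard1]
  exact absurd hbig (by nlinarith)

end IVT13
namespace IVT13

variable {Z : Type*} [MetricSpace Z]
set_option linter.unusedSectionVars false
set_option maxHeartbeats 1000000

variable [CompactSpace Z]

lemma exists_rich_point {b1 b2 : ℝ} (h0 : 0 < b1) (h12 : b1 < b2)
    (hrich : Rich (univ : Set Z) b2) :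
    ∃ x : Z, ∀ r : ℝ, 0 < r → Rich (closedBall x r) b1 := by
  have hZne : Nonempty Z := ⟨hrich.nonempty.choose⟩
  obtain ⟨y0⟩ := hZne
  obtain ⟨K', hK'⟩ :=
    (isCompact_univ : IsCompact (univ : Set Z)).isBounded.subset_closedBall y0
  set K : ℝ := max K' 0 with hK
  have hKnn : 0 ≤ K := le_max_right _ _
  have hKcov : (univ : Set Z) ⊆ closedBall y0 (K + 1) :=
    hK'.trans (closedBall_subset_closedBall (by simp [hK]; linarith [le_max_left K' (0:ℝ)]))
  set R : ℕ → ℝ := fun k => (K + 1) * (2⁻¹) ^ k with hR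
  have hRpos : ∀ k, 0 < R k := fun k => by simp only [hR]; positivity
  set γs : ℕ → ℝ := fun k => b1 + (b2 - b1) / (k + 1) with hγs
  have hγs0 : γs 0 = b2 := by simp [hγs]
  have hγsgt : ∀ k, b1 < γs k := fun k => by
    have : 0 < (b2 - b1) / ((k:ℝ) + 1) := div_pos (by linarith) (by positivity)
    simp only [hγs]; linarith
  have hγsdec : ∀ k, γs (k + 1) < γs k := fun k => by
    simp only [hγs]
    have h1 : ((k:ℝ) + 1) < ((k:ℝ) + 1 + 1) := by linarith
    have := div_lt_div_of_pos_left (by linarith : (0:ℝ) < b2 - b1) (by positivity) h1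
    push_cast
    linarith
  have step : ∀ k (C : Set Z), Rich C (γs k) → ∃ p : Set Z × Z,
      p.1 ⊆ C ∧ p.1 ⊆ closedBall p.2 (R (k+1)) ∧ Rich p.1 (γs (k+1)) := by
    intro k C hC
    obtain ⟨t, -, htfin, hcov⟩ :=
      finite_cover_balls_of_compact (isCompact_univ : IsCompact (univ : Set Z))
        (hRpos (k+1))
    obtain ⟨y, hyt, hry⟩ := hC.of_cover (lt_trans h0 (hγsgt (k+1))) (hγsdec k) htfin
      ((subset_univ C).trans hcov)
    exact ⟨(ball y (R (k+1)) ∩ C, y), inter_subset_right,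
      inter_subset_left.trans ball_subset_closedBall, hry⟩
  let motive : ℕ → Type _ := fun k =>
    {p : Set Z × Z // p.1 ⊆ closedBall p.2 (R k) ∧ Rich p.1 (γs k)}
  have hbase : (univ : Set Z) ⊆ closedBall y0 (R 0) ∧ Rich (univ : Set Z) (γs 0) := by
    constructor
    · simpa [hR] using hKcov
    · rw [hγs0]; exact hrich
  let base : motive 0 := ⟨(univ, y0), hbase⟩
  let stepF : ∀ k, motive k → motive (k+1) := fun k q =>
    ⟨Classical.choose (step k q.val.1 q.prop.2),
      (Classical.choose_spec (step k q.val.1 q.prop.2)).2⟩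
  let g : ∀ k, motive k := fun k => Nat.rec base stepF k
  have hchain : ∀ k, (g (k+1)).val.1 ⊆ (g k).val.1 := fun k =>
    (Classical.choose_spec (step k (g k).val.1 (g k).prop.2)).1
  have hchain' : ∀ j k, j ≤ k → (g k).val.1 ⊆ (g j).val.1 := by
    intro j k hjk
    induction k with
    | zero => rw [Nat.le_zero.mp hjk]
    | succ n ih =>
      rcases Nat.lt_or_ge j (n+1) with h | h
      · exact (hchain n).trans (ih (Nat.lt_succ_iff.mp h))
      · rw [le_antisymm hjk h]
  have hne : ∀ k, ((g k).val.1).Nonempty := fun k => (g k).prop.2.nonempty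
  choose z hz using hne
  have hdist : ∀ j k, j ≤ k → dist (z k) (z j) ≤ 2 * R j := by
    intro j k hjk
    have h1 : z k ∈ (g j).val.1 := hchain' j k hjk (hz k)
    have h2 := (g j).prop.1 h1
    have h3 := (g j).prop.1 (hz j)
    calc dist (z k) (z j) ≤ dist (z k) (g j).val.2 + dist (g j).val.2 (z j) :=
          dist_triangle _ _ _
      _ ≤ R j + R j := add_le_add (mem_closedBall.mp h2)
          (by rw [dist_comm]; exact mem_closedBall.mp h3)
      _ = 2 * R j := by ring
  have hRlim : ∀ η : ℝ, 0 < η → ∃ N, 2 * R N < η := by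
    intro η hη
    obtain ⟨N, hN⟩ := exists_pow_lt_of_lt_one
      (show (0:ℝ) < η / (2 * (K + 1)) by positivity) (by norm_num : (2⁻¹:ℝ) < 1)
    refine ⟨N, ?_⟩
    have : R N < η / 2 := by
      rw [hR]
      calc (K+1) * (2⁻¹)^N < (K+1) * (η / (2 * (K+1))) := by
            exact mul_lt_mul_of_pos_left hN (by positivity)
        _ = η / 2 := by field_simp
    linarith
  have hcauchy : CauchySeq z := by
    rw [Metric.cauchySeq_iff']
    intro η hη
    obtain ⟨N, hN⟩ := hRlim η hη
    exact ⟨N, fun n hn => lt_of_le_of_lt (hdist N n hn) hN⟩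
  obtain ⟨x, hx⟩ := cauchySeq_tendsto_of_complete hcauchy
  refine ⟨x, fun r hr => ?_⟩
  obtain ⟨k, hk⟩ := hRlim (r / 2) (by linarith)
  have hxz : dist x (z k) ≤ 2 * R k := by
    have htend : Tendsto (fun m => dist (z m) (z k)) atTop (𝓝 (dist x (z k))) :=
      hx.dist tendsto_const_nhds
    refine le_of_tendsto htend ?_
    filter_upwards [eventually_ge_atTop k] with m hm
    exact hdist k m hm
  have hsub : (g k).val.1 ⊆ closedBall x r := by
    intro w hw
    have h1 : dist w (z k) ≤ 2 * R k := by
      have h2 := (g k).prop.1 hw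
      have h3 := (g k).prop.1 (hz k)
      calc dist w (z k) ≤ dist w (g k).val.2 + dist (g k).val.2 (z k) := dist_triangle _ _ _
        _ ≤ R k + R k := add_le_add (mem_closedBall.mp h2)
            (by rw [dist_comm]; exact mem_closedBall.mp h3)
        _ = 2 * R k := by ring
    have : dist w x ≤ 2 * R k + 2 * R k := by
      calc dist w x ≤ dist w (z k) + dist (z k) x := dist_triangle _ _ _
        _ ≤ 2 * R k + 2 * R k := add_le_add h1 (by rw [dist_comm]; exact hxz)
    exact mem_closedBall.mpr (by linarith)
  exact ((g k).prop.2.mono_exp (hγsgt k).le).mono_set hsub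

end IVT13
namespace IVT13

variable {Z : Type*} [MetricSpace Z]
set_option linter.unusedSectionVars false
set_option maxHeartbeats 1000000

variable [CompactSpace Z]

/-- the diminishing exponent margin -/
def ηm (βr b1 : ℝ) (n : ℕ) : ℝ := (b1 - βr) / (n + 1)

/-- scale cap ensuring ceiling slack -/
def θm (βr b1 : ℝ) (n : ℕ) : ℝ := min ((2:ℝ) ^ (-(1 / ηm βr b1 n))) 4⁻¹

lemma ηm_pos {βr b1 : ℝ} (h : βr < b1) (n : ℕ) : 0 < ηm βr b1 n :=
  div_pos (by linarith) (by positivity)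

lemma ηm_le {βr b1 : ℝ} (h : βr < b1) (n : ℕ) : ηm βr b1 n ≤ b1 - βr := by
  rw [ηm, div_le_iff₀ (by positivity)]
  nlinarith [Nat.cast_nonneg (α := ℝ) n]

lemma θm_pos (βr b1 : ℝ) (n : ℕ) : 0 < θm βr b1 n :=
  lt_min (Real.rpow_pos_of_pos two_pos _) (by norm_num)

lemma θm_le_quarter (βr b1 : ℝ) (n : ℕ) : θm βr b1 n ≤ 4⁻¹ := min_le_right _ _

/-- one level of the construction -/
lemma step_level {βr b1 : ℝ} (hβr : 0 < βr) (hb1 : βr < b1) (xc : Z)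
    (hxc : ∀ r : ℝ, 0 < r → Rich (closedBall xc r) b1)
    (n : ℕ) (ρ : ℝ) (hρ : 0 < ρ) (hρθ : ρ ≤ θm βr b1 n) :
    ∃ c : ℝ, ∃ G : Finset Z,
      0 < c ∧ c ≤ ρ ∧
      ↑G ⊆ closedBall xc ρ ∧ IsSep c G ∧
      G.card = ⌈Real.exp (c ^ (-βr))⌉₊ ∧
      ∀ δ : ℝ, 0 < δ → δ ≤ ρ →
        (∃ s : Finset Z, ↑s ⊆ closedBall xc ρ ∧ IsSep δ s ∧
          Real.exp (δ ^ (-(βr + ηm βr b1 n))) ≤ (s.card : ℝ)) → δ ≤ 2 * c := by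
  set η := ηm βr b1 n with hη
  have hηpos : 0 < η := ηm_pos hb1 n
  have hηle : η ≤ b1 - βr := ηm_le hb1 n
  set D : Set ℝ := {δ : ℝ | 0 < δ ∧ δ ≤ ρ ∧ ∃ s : Finset Z, ↑s ⊆ closedBall xc ρ ∧
    IsSep δ s ∧ Real.exp (δ ^ (-(βr + η))) ≤ (s.card : ℝ)} with hD
  have hDne : D.Nonempty := by
    obtain ⟨ε, hε0, hερ, hε1, s, hs, hsep, hcard⟩ := hxc ρ hρ ρ hρ
    refine ⟨ε, hε0, hερ.le, s, hs, hsep, le_trans ?_ hcard⟩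
    refine Real.exp_le_exp.mpr (Real.rpow_le_rpow_of_exponent_ge hε0 hε1.le ?_)
    linarith
  have hDbdd : BddAbove D := ⟨ρ, fun δ hδ => hδ.2.1⟩
  have hc₀pos : 0 < sSup D := by
    obtain ⟨δ, hδ⟩ := hDne
    exact lt_of_lt_of_le hδ.1 (le_csSup hDbdd hδ)
  obtain ⟨c, hcD, hcgt⟩ := exists_lt_of_lt_csSup hDne (by linarith : sSup D / 2 < sSup D)
  obtain ⟨hc0, hcρ, s, hsB, hssep, hscard⟩ := hcD
  have hmax : ∀ δ : ℝ, 0 < δ → δ ≤ ρ →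
      (∃ s : Finset Z, ↑s ⊆ closedBall xc ρ ∧ IsSep δ s ∧
        Real.exp (δ ^ (-(βr + η))) ≤ (s.card : ℝ)) → δ ≤ 2 * c := by
    intro δ h1 h2 h3
    have : δ ≤ sSup D := le_csSup hDbdd ⟨h1, h2, h3⟩
    linarith
  -- extract the subset of the right cardinality
  have hc1 : c ≤ 4⁻¹ := hcρ.trans (hρθ.trans (θm_le_quarter βr b1 n))
  have hcθ : c ≤ (2:ℝ) ^ (-(1 / η)) := hcρ.trans (hρθ.trans (min_le_left _ _))
  have hcη : (2:ℝ) ≤ c ^ (-η) := by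
    have h1 : ((2:ℝ) ^ (-(1/η))) ^ (-η) ≤ c ^ (-η) := rpow_neg_anti hc0 hcθ hηpos.le
    have h2 : ((2:ℝ) ^ (-(1/η))) ^ (-η) = 2 := by
      rw [← Real.rpow_mul (by norm_num : (0:ℝ) ≤ 2)]
      have : (-(1/η)) * (-η) = 1 := by field_simp
      rw [this, Real.rpow_one]
    linarith
  have hcβ1 : (1:ℝ) ≤ c ^ (-βr) := one_le_rpow_neg hc0 (by linarith) hβr.le
  have hsplit : c ^ (-(βr + η)) = c ^ (-βr) * c ^ (-η) := by
    rw [← Real.rpow_add hc0]; ring_nf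
  have hslack : Real.exp (c ^ (-βr)) + 1 ≤ Real.exp (c ^ (-(βr + η))) := by
    have h1 : c ^ (-βr) + 1 ≤ c ^ (-(βr + η)) := by
      rw [hsplit]; nlinarith
    calc Real.exp (c ^ (-βr)) + 1 ≤ Real.exp (c ^ (-βr) + 1) := by
          rw [Real.exp_add]
          have he : (2:ℝ) ≤ Real.exp 1 := by
            have := Real.add_one_le_exp 1; linarith
          have hx1 : (1:ℝ) ≤ Real.exp (c ^ (-βr)) := by
            rw [← Real.exp_zero]
            exact Real.exp_le_exp.mpr (by linarith)
          nlinarith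
      _ ≤ Real.exp (c ^ (-(βr + η))) := Real.exp_le_exp.mpr h1
  set N : ℕ := ⌈Real.exp (c ^ (-βr))⌉₊ with hN
  have hNle : N ≤ s.card := by
    have h1 : (N:ℝ) < Real.exp (c ^ (-βr)) + 1 := Nat.ceil_lt_add_one (Real.exp_pos _).le
    have h2 : (N:ℝ) < (s.card : ℝ) := lt_of_lt_of_le h1 (hslack.trans hscard)
    exact_mod_cast h2.le
  obtain ⟨G, hGs, hGcard⟩ := s.exists_subset_card_eq (n := N) hNle
  exact ⟨c, G, hc0, hcρ, (Finset.coe_subset.mpr hGs).trans hsB, hssep.subset hGs, hGcard, hmax⟩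

lemma exists_construction {βr b1 : ℝ} (hβr : 0 < βr) (hb1 : βr < b1) (xc : Z)
    (hxc : ∀ r : ℝ, 0 < r → Rich (closedBall xc r) b1) :
    ∃ (r c : ℕ → ℝ) (G : ℕ → Finset Z),
      (∀ n, 0 < r n) ∧ (∀ n, r n ≤ θm βr b1 n) ∧ (∀ n, r n ≤ (2⁻¹:ℝ)^n) ∧
      (∀ n, 0 < c n) ∧ (∀ n, c n ≤ r n) ∧ (∀ n, r (n+1) ≤ c n / 8) ∧
      (∀ n, ↑(G n) ⊆ closedBall xc (r n)) ∧ (∀ n, IsSep (c n) (G n)) ∧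
      (∀ n, (G n).card = ⌈Real.exp ((c n) ^ (-βr))⌉₊) ∧
      (∀ n, ∀ δ : ℝ, 0 < δ → δ ≤ r n →
        (∃ s : Finset Z, ↑s ⊆ closedBall xc (r n) ∧ IsSep δ s ∧
          Real.exp (δ ^ (-(βr + ηm βr b1 n))) ≤ (s.card : ℝ)) → δ ≤ 2 * c n) := by
  classical
  let P : ℕ → ℝ → ℝ → Finset Z → Prop := fun n ρ c G =>
    0 < c ∧ c ≤ ρ ∧ ↑G ⊆ closedBall xc ρ ∧ IsSep c G ∧
      G.card = ⌈Real.exp (c ^ (-βr))⌉₊ ∧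
      ∀ δ : ℝ, 0 < δ → δ ≤ ρ →
        (∃ s : Finset Z, ↑s ⊆ closedBall xc ρ ∧ IsSep δ s ∧
          Real.exp (δ ^ (-(βr + ηm βr b1 n))) ≤ (s.card : ℝ)) → δ ≤ 2 * c
  have hstep : ∀ n (ρ : ℝ), 0 < ρ → ρ ≤ θm βr b1 n → ∃ c G, P n ρ c G := by
    intro n ρ h1 h2
    obtain ⟨c, G, h⟩ := step_level hβr hb1 xc hxc n ρ h1 h2
    exact ⟨c, G, h⟩
  let Q : ℕ → ℝ → Prop := fun n ρ => 0 < ρ ∧ ρ ≤ θm βr b1 n ∧ ρ ≤ (2⁻¹:ℝ)^n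
  let motive : ℕ → Type _ := fun n => {p : ℝ × ℝ × Finset Z // Q n p.1 ∧ P n p.1 p.2.1 p.2.2}
  have hbase : Q 0 (θm βr b1 0) := by
    refine ⟨θm_pos βr b1 0, le_rfl, ?_⟩
    have := θm_le_quarter βr b1 0
    norm_num at this ⊢
    linarith
  let base : motive 0 := by
    refine ⟨(θm βr b1 0, Classical.choose (hstep 0 _ hbase.1 hbase.2.1),
      Classical.choose (Classical.choose_spec (hstep 0 _ hbase.1 hbase.2.1))), hbase, ?_⟩
    exact Classical.choose_spec (Classical.choose_spec (hstep 0 _ hbase.1 hbase.2.1))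
  have hQsucc : ∀ n (q : motive n),
      Q (n+1) (min (q.val.2.1/8) (min (θm βr b1 (n+1)) ((2⁻¹:ℝ)^(n+1)))) := by
    intro n q
    have hc0 : 0 < q.val.2.1 := q.prop.2.1
    exact ⟨lt_min (by linarith) (lt_min (θm_pos βr b1 (n+1)) (by positivity)),
      le_trans (min_le_right _ _) (min_le_left _ _),
      le_trans (min_le_right _ _) (min_le_right _ _)⟩
  let stepF : ∀ n, motive n → motive (n+1) := fun n q =>
    ⟨(min (q.val.2.1/8) (min (θm βr b1 (n+1)) ((2⁻¹:ℝ)^(n+1))),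
      Classical.choose (hstep (n+1) _ (hQsucc n q).1 (hQsucc n q).2.1),
      Classical.choose (Classical.choose_spec (hstep (n+1) _ (hQsucc n q).1 (hQsucc n q).2.1))),
      hQsucc n q,
      Classical.choose_spec (Classical.choose_spec (hstep (n+1) _ (hQsucc n q).1 (hQsucc n q).2.1))⟩
  let g : ∀ n, motive n := fun n => Nat.rec base stepF n
  have hrel : ∀ n, (g (n+1)).val.1 =
      min ((g n).val.2.1/8) (min (θm βr b1 (n+1)) ((2⁻¹:ℝ)^(n+1))) := fun n => rfl
  refine ⟨fun n => (g n).val.1, fun n => (g n).val.2.1, fun n => (g n).val.2.2,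
    fun n => (g n).prop.1.1, fun n => (g n).prop.1.2.1, fun n => (g n).prop.1.2.2,
    fun n => (g n).prop.2.1, fun n => (g n).prop.2.2.1, ?_,
    fun n => (g n).prop.2.2.2.1, fun n => (g n).prop.2.2.2.2.1,
    fun n => (g n).prop.2.2.2.2.2.1, fun n => (g n).prop.2.2.2.2.2.2⟩
  intro n
  show (g (n+1)).val.1 ≤ (g n).val.2.1 / 8
  rw [hrel n]
  exact min_le_left _ _

end IVT13
namespace IVT13

variable {Z : Type*} [MetricSpace Z]
set_option linter.unusedSectionVars false
set_option maxHeartbeats 1000000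

variable [CompactSpace Z]

lemma counting {βr b1 : ℝ} (hβr : 0 < βr) (hb1 : βr < b1) (xc : Z)
    (r c : ℕ → ℝ) (G : ℕ → Finset Z)
    (hrpos : ∀ n, 0 < r n) (hrθ : ∀ n, r n ≤ θm βr b1 n)
    (hcpos : ∀ n, 0 < c n) (hcr : ∀ n, c n ≤ r n) (hrc8 : ∀ n, r (n+1) ≤ c n / 8)
    (hGsub : ∀ n, ↑(G n) ⊆ closedBall xc (r n)) (hGsep : ∀ n, IsSep (c n) (G n))
    (hGcard : ∀ n, (G n).card = ⌈Real.exp ((c n) ^ (-βr))⌉₊)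
    (hmax : ∀ n, ∀ δ : ℝ, 0 < δ → δ ≤ r n →
      (∃ s : Finset Z, ↑s ⊆ closedBall xc (r n) ∧ IsSep δ s ∧
        Real.exp (δ ^ (-(βr + ηm βr b1 n))) ≤ (s.card : ℝ)) → δ ≤ 2 * c n)
    (n : ℕ) (ε : ℝ) (hε1 : 2 * c (n+1) < ε) (hε2 : ε ≤ 2 * c n)
    (s : Finset Z) (hsY : ↑s ⊆ ⋃ m, (↑(G m) : Set Z)) (hsep : IsSep ε s) :
    (s.card : ℝ) ≤ ((n:ℝ) + 3) * (Real.exp ((ε/8) ^ (-(βr + ηm βr b1 (n+1)))) + 1) := by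
  classical
  set η' := ηm βr b1 (n+1) with hη'
  have hη'pos : 0 < η' := ηm_pos hb1 (n+1)
  set B := Real.exp ((ε/8) ^ (-(βr + η'))) with hB
  have hε0 : 0 < ε := lt_trans (by have := hcpos (n+1); linarith) hε1
  have hrquarter : ∀ m, r m ≤ 4⁻¹ := fun m => (hrθ m).trans (θm_le_quarter βr b1 m)
  have hchalf : ∀ m, c m ≤ 4⁻¹ := fun m => (hcr m).trans (hrquarter m)
  have hεhalf : ε ≤ 2⁻¹ := by have := hchalf n; linarith
  have hcmono : ∀ a b : ℕ, a ≤ b → c b ≤ c a := by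
    have hsucc : ∀ m, c (m+1) ≤ c m := fun m => by
      have h1 := (hcr (m+1)).trans (hrc8 m)
      have := hcpos m
      linarith
    intro a b hab
    induction b with
    | zero => rw [Nat.le_zero.mp hab]
    | succ k ih =>
      rcases Nat.lt_or_ge a (k+1) with h | h
      · exact (hsucc k).trans (ih (Nat.lt_succ_iff.mp h))
      · rw [le_antisymm hab h]
  have hrmono : ∀ a b : ℕ, a ≤ b → r b ≤ r a := by
    have hsucc : ∀ m, r (m+1) ≤ r m := fun m => by
      have h1 := (hrc8 m).trans (by have := hcr m; linarith : c m / 8 ≤ r m / 8)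
      have := hrpos m
      linarith
    intro a b hab
    induction b with
    | zero => rw [Nat.le_zero.mp hab]
    | succ k ih =>
      rcases Nat.lt_or_ge a (k+1) with h | h
      · exact (hsucc k).trans (ih (Nat.lt_succ_iff.mp h))
      · rw [le_antisymm hab h]
  -- key monotone bound for rpow expressions
  have hkey : ∀ x t : ℝ, ε/8 ≤ x → x ≤ 1 → 0 ≤ t → t ≤ βr + η' →
      x ^ (-t) ≤ (ε/8) ^ (-(βr + η')) := by
    intro x t hx1 hx2 ht1 ht2
    have hx0 : 0 < x := lt_of_lt_of_le (by linarith) hx1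
    calc x ^ (-t) ≤ x ^ (-(βr + η')) :=
          Real.rpow_le_rpow_of_exponent_ge hx0 hx2 (by linarith)
      _ ≤ (ε/8) ^ (-(βr + η')) := rpow_neg_anti (by linarith) hx1 (by linarith)
  have hB1 : ∀ x t : ℝ, ε/8 ≤ x → x ≤ 1 → 0 ≤ t → t ≤ βr + η' →
      Real.exp (x ^ (-t)) ≤ B := fun x t h1 h2 h3 h4 =>
    Real.exp_le_exp.mpr (hkey x t h1 h2 h3 h4)
  have hBpos : (0:ℝ) < B := Real.exp_pos _
  -- individual bounds
  have hbound : ∀ m ∈ Finset.range (n+2), ((s ∩ G m).card : ℝ) ≤ B + 1 := by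
    intro m hm
    have hmle : m ≤ n + 1 := Nat.lt_succ_iff.mp (Finset.mem_range.mp hm)
    rcases Nat.lt_or_ge m (n+1) with hmn | hmn
    · -- m ≤ n : use the full cardinality of G m
      have hmn' : m ≤ n := Nat.lt_succ_iff.mp hmn
      have h1 : ((s ∩ G m).card : ℝ) ≤ ((G m).card : ℝ) := by
        exact_mod_cast Finset.card_le_card (Finset.inter_subset_right)
      have h2 : ((G m).card : ℝ) ≤ Real.exp ((c m) ^ (-βr)) + 1 := by
        rw [hGcard m]
        exact (Nat.ceil_lt_add_one (Real.exp_pos _).le).le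
      have hcm : ε/2 ≤ c m := by
        have := hcmono m n hmn'
        linarith
      have h3 : Real.exp ((c m) ^ (-βr)) ≤ B :=
        hB1 (c m) βr (by linarith) (by have := hchalf m; linarith) hβr.le
          (by linarith)
      linarith
    · -- m = n+1
      have hm1 : m = n + 1 := le_antisymm hmle hmn
      subst hm1
      by_cases h2ρ : 2 * r (n+1) < ε
      · -- diameter small: at most one point
        have hcard1 : (s ∩ G (n+1)).card ≤ 1 := by
          rw [Finset.card_le_one]
          intro a ha b hb
          by_contra hab
          have haG := Finset.mem_inter.mp ha
          have hbG := Finset.mem_inter.mp hb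
          have hd : dist a b ≤ 2 * r (n+1) := by
            have h1 := hGsub (n+1) (haG.2)
            have h2 := hGsub (n+1) (hbG.2)
            calc dist a b ≤ dist a xc + dist xc b := dist_triangle _ _ _
              _ ≤ r (n+1) + r (n+1) := add_le_add (mem_closedBall.mp h1)
                  (by rw [dist_comm]; exact mem_closedBall.mp h2)
              _ = 2 * r (n+1) := by ring
          have := hsep a (Finset.mem_of_mem_inter_left ha) b
            (Finset.mem_of_mem_inter_left hb) hab
          linarith
        have : ((s ∩ G (n+1)).card : ℝ) ≤ 1 := by exact_mod_cast hcard1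
        linarith
      · push_neg at h2ρ
        by_cases hρc : r (n+1) ≤ 2 * c (n+1)
        · -- c (n+1) is comparable to ε
          have h1 : ((s ∩ G (n+1)).card : ℝ) ≤ ((G (n+1)).card : ℝ) := by
            exact_mod_cast Finset.card_le_card (Finset.inter_subset_right)
          have h2 : ((G (n+1)).card : ℝ) ≤ Real.exp ((c (n+1)) ^ (-βr)) + 1 := by
            rw [hGcard (n+1)]
            exact (Nat.ceil_lt_add_one (Real.exp_pos _).le).le
          have hc4 : ε/4 ≤ c (n+1) := by linarith
          have h3 : Real.exp ((c (n+1)) ^ (-βr)) ≤ B :=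
            hB1 (c (n+1)) βr (by linarith) (by have := hchalf (n+1); linarith) hβr.le
              (by linarith)
          linarith
        · push_neg at hρc
          set δ' := min ε (r (n+1)) with hδ'
          have hδ'pos : 0 < δ' := lt_min hε0 (hrpos (n+1))
          have hδ'le : δ' ≤ r (n+1) := min_le_right _ _
          have hδ'gt : 2 * c (n+1) < δ' := lt_min hε1 hρc
          have hlt : ((s ∩ G (n+1)).card : ℝ) < Real.exp (δ' ^ (-(βr + η'))) := by
            by_contra hge
            push_neg at hge
            have hsub' : ↑(s ∩ G (n+1)) ⊆ closedBall xc (r (n+1)) := by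
              intro z hz
              simp only [Finset.coe_inter, Set.mem_inter_iff] at hz
              exact hGsub (n+1) hz.2
            have hsep' : IsSep δ' (s ∩ G (n+1)) :=
              (hsep.subset (Finset.inter_subset_left)).mono (min_le_left _ _)
            have := hmax (n+1) δ' hδ'pos hδ'le ⟨s ∩ G (n+1), hsub', hsep', hge⟩
            linarith
          have hδ'ε8 : ε/8 ≤ δ' := by
            rcases le_total ε (r (n+1)) with h | h
            · rw [hδ', min_eq_left h]; linarith
            · rw [hδ', min_eq_right h]; linarith
          have h3 : Real.exp (δ' ^ (-(βr + η'))) ≤ B :=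
            hB1 δ' (βr + η') hδ'ε8 (by
              have : δ' ≤ ε := min_le_left _ _
              linarith) (by linarith) le_rfl
          linarith
  -- tail bound
  have htail : ((s.filter (· ∈ closedBall xc (r (n+2)))).card : ℝ) ≤ 1 := by
    have h1 : (s.filter (· ∈ closedBall xc (r (n+2)))).card ≤ 1 := by
      rw [Finset.card_le_one]
      intro a ha b hb
      by_contra hab
      have haf := Finset.mem_filter.mp ha
      have hbf := Finset.mem_filter.mp hb
      have hd : dist a b ≤ 2 * r (n+2) := by
        calc dist a b ≤ dist a xc + dist xc b := dist_triangle _ _ _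
          _ ≤ r (n+2) + r (n+2) := add_le_add (mem_closedBall.mp haf.2)
              (by rw [dist_comm]; exact mem_closedBall.mp hbf.2)
          _ = 2 * r (n+2) := by ring
      have h2 : 2 * r (n+2) < ε := by
        have h3 := hrc8 (n+1)
        have h4 := hcpos (n+1)
        linarith
      have := hsep a haf.1 b hbf.1 hab
      linarith
    exact_mod_cast h1
  -- main split
  have hsplit : s ⊆ ((Finset.range (n+2)).biUnion (fun m => s ∩ G m)) ∪
      s.filter (· ∈ closedBall xc (r (n+2))) := by
    intro x hx
    have hxY : (x : Z) ∈ ⋃ m, (↑(G m) : Set Z) := hsY hx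
    simp only [Set.mem_iUnion, Finset.mem_coe] at hxY
    obtain ⟨m, hm⟩ := hxY
    rcases Nat.lt_or_ge m (n+2) with h | h
    · exact Finset.mem_union_left _ (Finset.mem_biUnion.mpr
        ⟨m, Finset.mem_range.mpr h, Finset.mem_inter.mpr ⟨hx, hm⟩⟩)
    · refine Finset.mem_union_right _ (Finset.mem_filter.mpr ⟨hx, ?_⟩)
      have h1 := hGsub m hm
      exact closedBall_subset_closedBall (hrmono (n+2) m h) h1
  have hcount : (s.card : ℝ) ≤
      (∑ m ∈ Finset.range (n+2), ((s ∩ G m).card : ℝ)) +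
      ((s.filter (· ∈ closedBall xc (r (n+2)))).card : ℝ) := by
    have h1 : s.card ≤ ((Finset.range (n+2)).biUnion (fun m => s ∩ G m)).card +
        (s.filter (· ∈ closedBall xc (r (n+2)))).card :=
      le_trans (Finset.card_le_card hsplit) (Finset.card_union_le _ _)
    have h2 : ((Finset.range (n+2)).biUnion (fun m => s ∩ G m)).card ≤
        ∑ m ∈ Finset.range (n+2), (s ∩ G m).card := Finset.card_biUnion_le
    have := le_trans h1 (Nat.add_le_add_right h2 _)
    exact_mod_cast this
  have hsum : (∑ m ∈ Finset.range (n+2), ((s ∩ G m).card : ℝ)) ≤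
      ((n:ℝ) + 2) * (B + 1) := by
    calc (∑ m ∈ Finset.range (n+2), ((s ∩ G m).card : ℝ))
        ≤ ∑ _m ∈ Finset.range (n+2), (B + 1) := Finset.sum_le_sum hbound
      _ = ((n:ℝ) + 2) * (B + 1) := by
          rw [Finset.sum_const, nsmul_eq_mul, Finset.card_range]
          push_cast; ring
  calc (s.card : ℝ) ≤ ((n:ℝ) + 2) * (B + 1) + 1 := by linarith
    _ ≤ ((n:ℝ) + 3) * (B + 1) := by nlinarith [hBpos, Nat.cast_nonneg (α := ℝ) n]

end IVT13
namespace IVT13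

variable {Z : Type*} [MetricSpace Z]
set_option linter.unusedSectionVars false
set_option maxHeartbeats 2000000

variable [CompactSpace Z]

lemma mo_empty : upperMetricOrder (∅ : Set Z) = 0 := by
  have hsep : ∀ ε : ℝ, sepNum (∅ : Set Z) ε = 0 := by
    intro ε
    refine le_antisymm ?_ zero_le
    refine iSup₂_le fun s hs => ?_
    have hse : s = ∅ := by simpa using hs.1
    simp [hse]
  have hfun : (fun ε : ℝ =>
      ((Real.log (Real.log ((sepNum (∅ : Set Z) ε).toNat : ℝ)) / (-Real.log ε) : ℝ) : EReal)) =
      fun _ : ℝ => ((0:ℝ) : EReal) := by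
    funext ε
    rw [hsep ε]
    norm_num
  rw [upperMetricOrder, hfun, Filter.limsup_const]
  exact EReal.coe_zero

/-- Main case: `0 < βr` real, strictly below the order of the space. -/
lemma main_case {βr : ℝ} (hβr : 0 < βr)
    (hlt : ((βr : ℝ) : EReal) < upperMetricOrder (univ : Set Z)) :
    ∃ Y : Set Z, upperMetricOrder Y = ((βr : ℝ) : EReal) := by
  classical
  obtain ⟨b2, hb2a, hb2b⟩ := EReal.exists_between_coe_real hlt
  have hβb2 : βr < b2 := EReal.coe_lt_coe_iff.mp hb2a
  have hb2pos : 0 < b2 := lt_trans hβr hβb2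
  have hrich : Rich (univ : Set Z) b2 := rich_univ hb2pos hb2b
  set b1 : ℝ := (βr + b2) / 2 with hb1def
  have hb1a : βr < b1 := by rw [hb1def]; linarith
  have hb1b : b1 < b2 := by rw [hb1def]; linarith
  have hb1pos : 0 < b1 := lt_trans hβr hb1a
  obtain ⟨xc, hxc⟩ := exists_rich_point hb1pos hb1b hrich
  obtain ⟨r, c, G, hrpos, hrθ, hrdecay, hcpos, hcr, hrc8, hGsub, hGsep, hGcard, hmax⟩ :=
    exists_construction hβr hb1a xc hxc
  set Y : Set Z := ⋃ n, (↑(G n) : Set Z) with hY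
  refine ⟨Y, ?_⟩
  have hrquarter : ∀ m, r m ≤ 4⁻¹ := fun m => (hrθ m).trans (θm_le_quarter βr b1 m)
  have hcquarter : ∀ m, c m ≤ 4⁻¹ := fun m => (hcr m).trans (hrquarter m)
  have hcdecay : ∀ m, c m ≤ (2⁻¹:ℝ)^m := fun m => (hcr m).trans (hrdecay m)
  have hcmono : ∀ a b : ℕ, a ≤ b → c b ≤ c a := by
    have hsucc : ∀ m, c (m+1) ≤ c m := fun m => by
      have h1 := (hcr (m+1)).trans (hrc8 m)
      have := hcpos m
      linarith
    intro a b hab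
    induction b with
    | zero => rw [Nat.le_zero.mp hab]
    | succ k ih =>
      rcases Nat.lt_or_ge a (k+1) with h | h
      · exact (hsucc k).trans (ih (Nat.lt_succ_iff.mp h))
      · rw [le_antisymm hab h]
  -- the real-valued ratio function
  set fY : ℝ → ℝ := fun ε => Real.log (Real.log (Sr Y ε)) / (-Real.log ε) with hfY
  have hmo : upperMetricOrder Y = Filter.limsup (fun ε : ℝ => ((fY ε : ℝ) : EReal)) (𝓝[>] (0:ℝ)) :=
    rfl
  -- ===================== LOWER BOUND =====================
  have hlow : ((βr : ℝ) : EReal) ≤ upperMetricOrder Y := by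
    rw [hmo]
    refine le_limsup_of_frequently_le ?_ (by isBoundedDefault)
    have htendc : Tendsto c atTop (𝓝[>] (0:ℝ)) := by
      rw [tendsto_nhdsWithin_iff]
      constructor
      · exact squeeze_zero (fun k => (hcpos k).le) hcdecay
          (tendsto_pow_atTop_nhds_zero_of_lt_one (by norm_num) (by norm_num))
      · exact Eventually.of_forall fun k => mem_Ioi.mpr (hcpos k)
    refine htendc.frequently (Frequently.of_forall fun k => ?_)
    -- show βr ≤ fY (c k)
    have hck1 : c k < 1 := lt_of_le_of_lt (hcquarter k) (by norm_num)
    have ht : 0 < -Real.log (c k) := by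
      have := Real.log_neg (hcpos k) hck1
      linarith
    have hGY : ↑(G k) ⊆ Y := by
      rw [hY]; exact subset_iUnion (fun n => (↑(G n) : Set Z)) k
    have hSr : ((G k).card : ℝ) ≤ Sr Y (c k) := le_Sr (hcpos k) hGY (hGsep k)
    have hexp : Real.exp ((c k) ^ (-βr)) ≤ ((G k).card : ℝ) := by
      rw [hGcard k]; exact Nat.le_ceil _
    set x : ℝ := (c k) ^ (-βr) with hx
    have hx1 : 1 ≤ x := one_le_rpow_neg (hcpos k) hck1.le hβr.le
    have hSx : Real.exp x ≤ Sr Y (c k) := hexp.trans hSr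
    have hlog1 : x ≤ Real.log (Sr Y (c k)) := by
      have := Real.log_le_log (Real.exp_pos x) hSx
      rwa [Real.log_exp] at this
    have hlog2 : Real.log x ≤ Real.log (Real.log (Sr Y (c k))) :=
      Real.log_le_log (by linarith) hlog1
    have hlogx : Real.log x = βr * (-Real.log (c k)) := by
      rw [hx, Real.log_rpow (hcpos k)]; ring
    have : βr * (-Real.log (c k)) ≤ Real.log (Real.log (Sr Y (c k))) := by
      rw [← hlogx]; exact hlog2
    have hfYk : βr ≤ fY (c k) := by
      rw [hfY]
      rw [le_div_iff₀ ht]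
      linarith
    exact EReal.coe_le_coe_iff.mpr hfYk
  -- ===================== UPPER BOUND =====================
  have hup : upperMetricOrder Y ≤ ((βr : ℝ) : EReal) := by
    have H : ∀ b : ℝ, βr < b → upperMetricOrder Y ≤ ((b : ℝ) : EReal) := by
      intro b hb
      set h : ℝ := (b - βr) / 2 with hh
      have hhpos : 0 < h := by rw [hh]; linarith
      set n₁ : ℕ := ⌈(b1 - βr) / h⌉₊ with hn₁
      have hηsmall : ∀ n : ℕ, n₁ ≤ n → ηm βr b1 (n+1) ≤ h := by
        intro n hn
        rw [ηm, div_le_iff₀ (by positivity)]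
        have h1 : (b1 - βr) / h ≤ (n₁ : ℝ) := Nat.le_ceil _
        have h2 : (n₁:ℝ) ≤ (n:ℝ) := by exact_mod_cast hn
        have h4 : b1 - βr ≤ ((n:ℝ) + 2) * h := by
          calc b1 - βr = ((b1 - βr)/h) * h := by field_simp
            _ ≤ ((n:ℝ) + 2) * h := mul_le_mul_of_nonneg_right (by linarith) hhpos.le
        push_cast
        linarith
      set T : ℝ := max (max (48 / βr^2) 4) ((Real.log 2 + b * Real.log 8)/h + 1) with hT
      set δ₀ : ℝ := min (2 * c n₁) (Real.exp (-T)) with hδ₀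
      have hδ₀pos : 0 < δ₀ := lt_min (by have := hcpos n₁; linarith) (Real.exp_pos _)
      rw [hmo]
      refine limsup_le_of_le (by isBoundedDefault) ?_
      filter_upwards [Ioc_mem_nhdsGT_of_mem
        (show (0:ℝ) ∈ Ico (0:ℝ) δ₀ from ⟨le_rfl, hδ₀pos⟩)] with ε hε
      obtain ⟨hε0, hεδ₀⟩ := hε
      refine EReal.coe_le_coe_iff.mpr ?_
      -- conditions
      have hεc1 : ε ≤ 2 * c n₁ := hεδ₀.trans (min_le_left _ _)
      have hεT : T ≤ -Real.log ε := by
        have h1 : ε ≤ Real.exp (-T) := hεδ₀.trans (min_le_right _ _)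
        have h2 := Real.log_le_log hε0 h1
        rw [Real.log_exp] at h2
        linarith
      set t : ℝ := -Real.log ε with htdef
      have htrw : -Real.log ε = t := rfl
      clear_value t
      have ht4 : (4:ℝ) ≤ t := le_trans (le_trans (le_max_right _ _) (le_max_left _ _)) hεT
      have ht48 : 48 / βr^2 ≤ t := le_trans (le_trans (le_max_left _ _) (le_max_left _ _)) hεT
      have htK : (Real.log 2 + b * Real.log 8)/h + 1 ≤ t := le_trans (le_max_right _ _) hεT
      have htpos : (0:ℝ) < t := by linarith
      -- find the level n
      have hex : ∃ m : ℕ, ¬ (ε ≤ 2 * c m) := by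
        obtain ⟨m, hm⟩ := exists_pow_lt_of_lt_one (show (0:ℝ) < ε/2 by linarith)
          (by norm_num : (2⁻¹:ℝ) < 1)
        exact ⟨m, by push_neg; have := hcdecay m; linarith⟩
      obtain ⟨m₀, hm₀spec, hm₀min⟩ : ∃ m₀ : ℕ, ¬ (ε ≤ 2 * c m₀) ∧ ∀ m, m < m₀ → ε ≤ 2 * c m :=
        ⟨Nat.find hex, Nat.find_spec hex, fun m hm => not_not.mp (Nat.find_min hex hm)⟩
      have hn₁m₀ : n₁ < m₀ := by
        by_contra hcon
        push_neg at hcon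
        refine hm₀spec ?_
        have := hcmono m₀ n₁ hcon
        linarith
      obtain ⟨n, rfl⟩ : ∃ n, m₀ = n + 1 := ⟨m₀ - 1, by omega⟩
      have hn : n₁ ≤ n := by omega
      have hPn : ε ≤ 2 * c n := hm₀min n (by omega)
      have hPn1 : 2 * c (n+1) < ε := by push_neg at hm₀spec; exact hm₀spec
      -- counting bound
      set η' : ℝ := ηm βr b1 (n+1) with hη'
      set B : ℝ := Real.exp ((ε/8) ^ (-(βr + η'))) with hBdef
      have hB1 : (1:ℝ) ≤ B := by
        rw [hBdef, ← Real.exp_zero]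
        exact Real.exp_le_exp.mpr (Real.rpow_nonneg (by linarith) _)
      have hcard : ∀ s : Finset Z, ↑s ⊆ Y → IsSep ε s →
          (s.card : ℝ) ≤ ((n:ℝ) + 3) * (B + 1) := by
        intro s hsY hsep
        exact counting hβr hb1a xc r c G hrpos hrθ hcpos hcr hrc8 hGsub hGsep hGcard hmax
          n ε hPn1 hPn s hsY hsep
      have hSrle : Sr Y ε ≤ ((n:ℝ) + 3) * (B + 1) + 1 :=
        Sr_le_of_forall (by positivity) hcard
      -- numeric chain
      rcases lt_or_ge (Sr Y ε) 2 with hS2 | hS2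
      · -- Sv = 0 or 1 : value is 0
        have hlog0 : Real.log (Sr Y ε) = 0 := by
          have h1 : (sepNum Y ε).toNat = 0 ∨ (sepNum Y ε).toNat = 1 := by
            have h2 : ((sepNum Y ε).toNat : ℝ) < 2 := hS2
            have h3 : (sepNum Y ε).toNat < 2 := by exact_mod_cast h2
            omega
          rcases h1 with h | h <;> simp [Sr, h]
        show Real.log (Real.log (Sr Y ε)) / -Real.log ε ≤ b
        rw [hlog0, Real.log_zero, zero_div]
        linarith
      · -- main case Sv ≥ 2
        have hn2t : (n:ℝ) ≤ 1 + 2*t := by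
          have h1 : ε/2 ≤ (2⁻¹:ℝ)^n := by
            have := hcdecay n; linarith
          have h2 : Real.log (ε/2) ≤ Real.log ((2⁻¹:ℝ)^n) :=
            Real.log_le_log (by linarith) h1
          rw [Real.log_pow, Real.log_inv, Real.log_div (by linarith) (by norm_num)] at h2
          have hl2 : (0.6931471803:ℝ) < Real.log 2 := Real.log_two_gt_d9
          nlinarith
        have hSv3 : Sr Y ε ≤ 3 * ((n:ℝ) + 3) * B := by
          have : ((n:ℝ)+3) * (B+1) + 1 ≤ 3 * ((n:ℝ)+3) * B := by
            nlinarith [Nat.cast_nonneg (α := ℝ) n]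
          linarith
        set u : ℝ := (βr + h) * (Real.log 8 + t) with hu
        have hAlog : Real.log (3 * ((n:ℝ)+3)) ≤ Real.exp (βr * t) := by
          have h1 : Real.log (3 * ((n:ℝ)+3)) ≤ 3 * ((n:ℝ)+3) - 1 :=
            Real.log_le_sub_one_of_pos (by positivity)
          have h2 : 3 * ((n:ℝ)+3) - 1 ≤ 12 * t := by nlinarith
          have h3 : (βr * t)^2 / 4 ≤ Real.exp (βr * t) := by
            have h4 : βr * t / 2 + 1 ≤ Real.exp (βr * t / 2) := Real.add_one_le_exp _
            have h5 : (βr * t / 2 + 1)^2 ≤ (Real.exp (βr * t / 2))^2 := by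
              have : 0 ≤ βr * t / 2 + 1 := by positivity
              nlinarith
            have h6 : (Real.exp (βr * t / 2))^2 = Real.exp (βr * t) := by
              rw [sq, ← Real.exp_add]; ring_nf
            nlinarith [mul_pos hβr htpos]
          have h7 : 12 * t ≤ (βr * t)^2 / 4 := by
            have : 48 ≤ βr^2 * t := by
              have := mul_le_mul_of_nonneg_right ht48 (sq_nonneg βr)
              rw [div_mul_eq_mul_div, mul_comm] at this
              have hβ2 : (0:ℝ) < βr^2 := by positivity
              calc (48:ℝ) = 48 / βr^2 * βr^2 := by field_simp
                _ ≤ t * βr^2 := mul_le_mul_of_nonneg_right ht48 hβ2.le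
                _ = βr^2 * t := by ring
            have h48t : 48 * t ≤ βr^2 * t * t := mul_le_mul_of_nonneg_right this htpos.le
            rw [show (βr * t)^2 = βr^2 * t * t from by ring]
            linarith
          linarith
        have hX : (ε/8) ^ (-(βr + η')) ≤ Real.exp u := by
          have h1 : (ε/8) ^ (-(βr + η')) =
              Real.exp ((βr + η') * (Real.log 8 + t)) := by
            rw [Real.rpow_def_of_pos (by linarith)]
            rw [Real.log_div (by linarith) (by norm_num), htdef]
            ring_nf
          rw [h1, hu]
          refine Real.exp_le_exp.mpr ?_
          have hη'h : η' ≤ h := hηsmall n hn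
          have hlog8 : (0:ℝ) ≤ Real.log 8 := Real.log_nonneg (by norm_num)
          nlinarith [ηm_pos hb1a (n+1)]
        have hexpu : Real.exp (βr * t) ≤ Real.exp u := by
          refine Real.exp_le_exp.mpr ?_
          rw [hu]
          have hlog8 : (0:ℝ) ≤ Real.log 8 := Real.log_nonneg (by norm_num)
          nlinarith
        have hlogSv : Real.log (Sr Y ε) ≤ 2 * Real.exp u := by
          have h1 : Real.log (Sr Y ε) ≤ Real.log (3 * ((n:ℝ)+3) * B) :=
            Real.log_le_log (by linarith) hSv3
          have h2 : Real.log (3 * ((n:ℝ)+3) * B) =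
              Real.log (3 * ((n:ℝ)+3)) + (ε/8) ^ (-(βr + η')) := by
            rw [Real.log_mul (by positivity) (by positivity), hBdef, Real.log_exp]
          rw [h2] at h1
          linarith
        have hloglog : Real.log (Real.log (Sr Y ε)) ≤ Real.log 2 + u := by
          have h0 : 0 < Real.log (Sr Y ε) := Real.log_pos (by linarith)
          have h1 : Real.log (Real.log (Sr Y ε)) ≤ Real.log (2 * Real.exp u) :=
            Real.log_le_log h0 hlogSv
          rw [Real.log_mul (by norm_num) (Real.exp_pos u).ne', Real.log_exp] at h1
          exact h1
        show Real.log (Real.log (Sr Y ε)) / -Real.log ε ≤ b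
        rw [htrw, div_le_iff₀ htpos]
        have hfinal : Real.log 2 + u ≤ b * t := by
          rw [hu]
          have hexpand : (βr + h) * (Real.log 8 + t) =
              (βr + h) * Real.log 8 + (βr + h) * t := by ring
          rw [hexpand]
          have h1 : (βr + h) * t + h * t = b * t := by rw [hh]; ring
          have h2 : Real.log 2 + (βr + h) * Real.log 8 ≤ h * t := by
            have h3 : βr + h ≤ b := by rw [hh]; linarith
            have hlog8 : (0:ℝ) ≤ Real.log 8 := Real.log_nonneg (by norm_num)
            have h4 : (βr + h) * Real.log 8 ≤ b * Real.log 8 :=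
              mul_le_mul_of_nonneg_right h3 hlog8
            have h5 : (Real.log 2 + b * Real.log 8)/h + 1 ≤ t := htK
            have h6 : Real.log 2 + b * Real.log 8 ≤ h * t := by
              rw [div_add' _ _ _ hhpos.ne'] at h5
              have := (div_le_iff₀ hhpos).mp h5
              nlinarith
            linarith
          linarith
        linarith
    by_contra hcon
    push_neg at hcon
    obtain ⟨q, hq1, hq2⟩ := EReal.exists_between_coe_real hcon
    exact absurd (H q (EReal.coe_lt_coe_iff.mp hq1)) (not_le.mpr hq2)
  exact le_antisymm hup hlow

end IVT13
/-- the upper metric order has the intermediate value property on subsets of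
a compact metric space: for every `β ∈ [0,∞]` with `β ≤ mo⁺(Z)` there is `Y ⊆ Z` with
`mo⁺(Y) = β`. -/
theorem upperMetricOrder_intermediateValue
    {Z : Type*} [MetricSpace Z] [CompactSpace Z]
    (β : EReal) (hβ0 : 0 ≤ β) (hβ : β ≤ upperMetricOrder (Set.univ : Set Z)) :
    ∃ Y : Set Z, upperMetricOrder Y = β := by
  rcases eq_or_lt_of_le hβ with heq | hlt
  · exact ⟨Set.univ, heq.symm⟩
  · have hβtop : β ≠ ⊤ := ne_top_of_lt hlt
    have hβbot : β ≠ ⊥ := by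
      intro hbot
      rw [hbot] at hβ0
      exact absurd hβ0 (not_le.mpr EReal.bot_lt_zero)
    have hcoe : ((β.toReal : ℝ) : EReal) = β := EReal.coe_toReal hβtop hβbot
    have h0 : 0 ≤ β.toReal := by
      rw [← hcoe] at hβ0
      exact EReal.coe_nonneg.mp hβ0
    rcases eq_or_lt_of_le h0 with h00 | hpos
    · refine ⟨∅, ?_⟩
      rw [IVT13.mo_empty, ← hcoe, ← h00]
      exact EReal.coe_zero.symm
    · obtain ⟨Y, hY⟩ := IVT13.main_case hpos (by rw [hcoe]; exact hlt)
      exact ⟨Y, by rw [hY, hcoe]⟩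
end
end

section
/- Let (Z,d) be a nonempty compact metric space, λ ∈ (0, 1/2) and k ∈ ℕ. Then there exists a finite partition of Z into nonempty Borel sets, each of diameter at most 2λ^k, and each containing an open ball of Z of radius λ^{k+1}. -/
open Metric Set

/-- in a nonempty compact metric space, for any `λ ∈ (0, 1/2)` and `k ∈ ℕ`
there is a finite partition into nonempty Borel sets, each of diameter at most `2 λ^k` and
each containing an open ball of radius `λ^(k+1)`. -/
theorem exists_finite_partition_diam_le_containing_balls
    {Z : Type*} [MetricSpace Z] [CompactSpace Z] [Nonempty Z]
    [MeasurableSpace Z] [BorelSpace Z]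
    (lam : ℝ) (hlam : lam ∈ Set.Ioo (0:ℝ) (1/2)) (k : ℕ) :
    ∃ P : Finset (Set Z),
      (∀ E ∈ P, E.Nonempty ∧ MeasurableSet E ∧ Metric.diam E ≤ 2 * lam ^ k ∧
        ∃ c : Z, Metric.ball c (lam ^ (k + 1)) ⊆ E) ∧
      (∀ E ∈ P, ∀ E' ∈ P, E ≠ E' → Disjoint E E') ∧
      ⋃₀ (P : Set (Set Z)) = Set.univ := by
  classical
  obtain ⟨hl0, hl2⟩ := hlam
  set r : ℝ := lam ^ k with hr_def
  set t : ℝ := lam ^ (k + 1) with ht_def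
  have hr : 0 < r := pow_pos hl0 k
  have ht : 0 < t := pow_pos hl0 (k + 1)
  have h2t : 2 * t < r := by
    have h1 : 2 * lam < 1 := by linarith
    have h2 : 2 * t = (2 * lam) * lam ^ k := by rw [ht_def]; ring
    rw [h2]
    calc (2 * lam) * lam ^ k < 1 * lam ^ k := mul_lt_mul_of_pos_right h1 hr
      _ = r := one_mul r
  -- maximal r-separated set
  obtain ⟨S, hSmax⟩ : ∃ S, Maximal (· ∈ {S : Set Z | S.Pairwise fun x y => r ≤ dist x y}) S := by
    apply zorn_subset
    intro c hc hchain
    refine ⟨⋃₀ c, ?_, fun s hs => subset_sUnion_of_mem hs⟩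
    intro x hx y hy hxy
    obtain ⟨s, hs, hxs⟩ := hx
    obtain ⟨s', hs', hys⟩ := hy
    rcases hchain.total hs hs' with h | h
    · exact hc hs' (h hxs) hys hxy
    · exact hc hs hxs (h hys) hxy
  have hS_sep : S.Pairwise fun x y => r ≤ dist x y := hSmax.1
  have hS_cov : ∀ z : Z, ∃ c ∈ S, dist z c < r := by
    intro z
    by_contra h
    push_neg at h
    have hzS : z ∉ S := fun hz => absurd (h z hz) (by simp [hr])
    have hins : (insert z S).Pairwise fun x y => r ≤ dist x y := by
      haveI : Std.Symm (fun x y : Z => r ≤ dist x y) := ⟨fun a b hab => by rwa [dist_comm]⟩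
      rw [Set.pairwise_insert_of_symm]
      exact ⟨hS_sep, fun b hb _ => by simpa [dist_comm] using h b hb⟩
    have hsub := hSmax.2 hins (Set.subset_insert z S)
    exact hzS (hsub (Set.mem_insert z S))
  have hSfin : S.Finite := by
    by_contra hinf
    obtain ⟨x, hx⟩ := Set.Infinite.exists_accPt_principal hinf
    rw [accPt_iff_nhds] at hx
    obtain ⟨y₁, ⟨hy₁b, hy₁S⟩, hy₁x⟩ :=
      hx (ball x (r / 2)) (ball_mem_nhds x (by linarith))
    have hmem : (ball x (r / 2) \ {y₁}) ∈ nhds x := by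
      apply IsOpen.mem_nhds (isOpen_ball.sdiff isClosed_singleton)
      exact ⟨mem_ball_self (by linarith), fun h => hy₁x (by simpa using h.symm)⟩
    obtain ⟨y₂, ⟨⟨hy₂b, hy₂ne⟩, hy₂S⟩, hy₂x⟩ := hx _ hmem
    have hne : y₁ ≠ y₂ := fun h => hy₂ne (by simp [h])
    have := hS_sep hy₁S hy₂S hne
    have hlt : dist y₁ y₂ < r := by
      calc dist y₁ y₂ ≤ dist y₁ x + dist x y₂ := dist_triangle _ _ _
        _ < r / 2 + r / 2 := by
            have h1 : dist y₁ x < r / 2 := by rwa [mem_ball] at hy₁b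
            have h2 : dist x y₂ < r / 2 := by rw [dist_comm]; rwa [mem_ball] at hy₂b
            linarith
        _ = r := by ring
    linarith
  -- enumerate S
  set n : ℕ := hSfin.toFinset.card with hn_def
  set e := hSfin.toFinset.equivFin with he_def
  set c : Fin n → Z := fun i => (e.symm i : Z) with hc_def
  have hcS : ∀ i, c i ∈ S := fun i => hSfin.mem_toFinset.mp (e.symm i).2
  have hc_surj : ∀ z ∈ S, ∃ i, c i = z := by
    intro z hz
    exact ⟨e ⟨z, hSfin.mem_toFinset.mpr hz⟩, by simp [hc_def]⟩
  have hc_inj : Function.Injective c := by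
    intro i j h
    have := Subtype.ext (p := (· ∈ hSfin.toFinset)) h
    exact e.symm.injective this
  have hsep : ∀ i j, i ≠ j → r ≤ dist (c i) (c j) := fun i j hij =>
    hS_sep (hcS i) (hcS j) (fun h => hij (hc_inj h))
  have hcov : ∀ z : Z, ∃ i, dist z (c i) < r := by
    intro z
    obtain ⟨y, hyS, hyd⟩ := hS_cov z
    obtain ⟨i, hi⟩ := hc_surj y hyS
    exact ⟨i, by rwa [hi]⟩
  -- the partition pieces
  set U : Fin n → Set Z := fun i => ball (c i) (r - t) with hU_def
  set V : Fin n → Set Z := fun i => ball (c i) r with hV_def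
  set E : Fin n → Set Z := fun i =>
    (U i \ ⋃ j, ⋃ (_ : j < i), U j) ∪
    (V i \ ((⋃ j, U j) ∪ ⋃ j, ⋃ (_ : j < i), V j)) with hE_def
  have hEsubV : ∀ i, E i ⊆ V i := by
    intro i x hx
    rcases hx with hx | hx
    · exact ball_subset_ball (by linarith) hx.1
    · exact hx.1
  have hball : ∀ i, ball (c i) t ⊆ E i := by
    intro i x hx
    rw [mem_ball] at hx
    left
    constructor
    · rw [hU_def, mem_ball]; linarith
    · simp only [Set.mem_iUnion, not_exists]
      intro j hj
      rw [hU_def, mem_ball]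
      intro hd
      have hsep' := hsep i j (ne_of_lt hj).symm
      have : dist (c i) (c j) ≤ dist (c i) x + dist x (c j) := dist_triangle _ _ _
      rw [dist_comm (c i) x] at this
      linarith
  have hEmeas : ∀ i, MeasurableSet (E i) := by
    intro i
    apply MeasurableSet.union
    · exact (measurableSet_ball).diff (MeasurableSet.iUnion fun j =>
        MeasurableSet.iUnion fun _ => measurableSet_ball)
    · exact (measurableSet_ball).diff ((MeasurableSet.iUnion fun j =>
        measurableSet_ball).union (MeasurableSet.iUnion fun j =>
        MeasurableSet.iUnion fun _ => measurableSet_ball))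
  have hEdisj : ∀ i j, i ≠ j → Disjoint (E i) (E j) := by
    have key : ∀ i j : Fin n, i < j → Disjoint (E i) (E j) := by
      intro i j hij
      rw [Set.disjoint_left]
      intro x hxi hxj
      rcases hxi with hxi | hxi
      · -- x ∈ U i
        have hxU : x ∈ U i := hxi.1
        rcases hxj with hxj | hxj
        · exact hxj.2 (Set.mem_iUnion.mpr ⟨i, Set.mem_iUnion.mpr ⟨hij, hxU⟩⟩)
        · exact hxj.2 (Or.inl (Set.mem_iUnion.mpr ⟨i, hxU⟩))
      · -- x ∈ V i \ (all U ∪ earlier V)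
        rcases hxj with hxj | hxj
        · exact hxi.2 (Or.inl (Set.mem_iUnion.mpr ⟨j, hxj.1⟩))
        · exact hxj.2 (Or.inr (Set.mem_iUnion.mpr ⟨i, Set.mem_iUnion.mpr ⟨hij, hxi.1⟩⟩))
    intro i j hij
    rcases lt_or_gt_of_ne hij with h | h
    · exact key i j h
    · exact (key j i h).symm
  have hEcov : ∀ z : Z, ∃ i, z ∈ E i := by
    intro z
    by_cases h : ∃ j, z ∈ U j
    · set s : Finset (Fin n) := Finset.univ.filter (fun j => z ∈ U j) with hs_def
      have hs_ne : s.Nonempty := by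
        obtain ⟨j, hj⟩ := h
        exact ⟨j, by simp [hs_def, hj]⟩
      set i := s.min' hs_ne with hi_def
      refine ⟨i, Or.inl ⟨?_, ?_⟩⟩
      · exact (Finset.mem_filter.mp (s.min'_mem hs_ne)).2
      · simp only [Set.mem_iUnion, not_exists]
        intro j hj hU
        have : i ≤ j := s.min'_le j (by simp [hs_def, hU])
        exact absurd hj (not_lt.mpr this)
    · push_neg at h
      obtain ⟨j₀, hj₀⟩ := hcov z
      set s : Finset (Fin n) := Finset.univ.filter (fun j => z ∈ V j) with hs_def
      have hs_ne : s.Nonempty := ⟨j₀, by simp [hs_def, hV_def, mem_ball, hj₀]⟩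
      set i := s.min' hs_ne with hi_def
      refine ⟨i, Or.inr ⟨?_, ?_⟩⟩
      · exact (Finset.mem_filter.mp (s.min'_mem hs_ne)).2
      · rintro (hx | hx)
        · obtain ⟨j, hj⟩ := Set.mem_iUnion.mp hx
          exact h j hj
        · simp only [Set.mem_iUnion] at hx
          obtain ⟨j, hj, hV⟩ := hx
          have : i ≤ j := s.min'_le j (by simp [hs_def, hV])
          exact absurd hj (not_lt.mpr this)
  -- assemble
  refine ⟨Finset.univ.image E, ?_, ?_, ?_⟩
  · intro F hF
    obtain ⟨i, _, rfl⟩ := Finset.mem_image.mp hF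
    refine ⟨⟨c i, hball i (mem_ball_self ht)⟩, hEmeas i, ?_, ⟨c i, hball i⟩⟩
    calc Metric.diam (E i) ≤ Metric.diam (V i) :=
          Metric.diam_mono (hEsubV i) isBounded_ball
      _ ≤ 2 * r := Metric.diam_ball hr.le
  · intro F hF F' hF' hne
    obtain ⟨i, _, rfl⟩ := Finset.mem_image.mp hF
    obtain ⟨j, _, rfl⟩ := Finset.mem_image.mp hF'
    exact hEdisj i j (fun h => hne (by rw [h]))
  · ext z
    simp only [Set.mem_sUnion, Set.mem_univ, iff_true]
    obtain ⟨i, hi⟩ := hEcov z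
    exact ⟨E i, by simp [Finset.coe_image], hi⟩
end
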